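/- arXiv:2106.15956 — 3 statements merged into one kernel-verified Lean document; each statement's English description precedes it below -/
import Mathlib

section
/- Let a continuous linear map λ:C→ℝ^q and z∈[−r,0) be given. Then there exists φ∈C^1 with φ'(0)=1, λφ=0, and φ(t)=0 for all t∈[−r,z]∪{0}. -/
set_option linter.unusedSectionVars false

open Set

noncomputable section

/-- The compact interval `[-r,0]`. -/
abbrev Icc0 (r : ℝ) : Set ℝ := Set.Icc (-r) 0

/-- Extension of a continuous map on `[-r,0]` to `ℝ`, by the value `0` outside. -/
def extFun {r : ℝ} {E : Type*} [TopologicalSpace E] [Zero E] (φ : C(Icc0 r, E)) : ℝ → E :=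
  fun t => if h : t ∈ Icc0 r then φ ⟨t, h⟩ else 0

section extlemmas

variable {r : ℝ} {E : Type*} [NormedAddCommGroup E] [NormedSpace ℝ E]

lemma extFun_add (φ ψ : C(Icc0 r, E)) : extFun (φ + ψ) = extFun φ + extFun ψ := by
  funext t; by_cases h : t ∈ Icc0 r <;> simp [extFun, h]

lemma extFun_zero : extFun (0 : C(Icc0 r, E)) = 0 := by
  funext t; by_cases h : t ∈ Icc0 r <;> simp [extFun, h]

lemma extFun_smul (c : ℝ) (φ : C(Icc0 r, E)) : extFun (c • φ) = c • extFun φ := by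
  funext t; by_cases h : t ∈ Icc0 r <;> simp [extFun, h]

end extlemmas

/-- The space `C¹([-r,0],E)`, realized as the closed subspace of pairs `(φ, φ')` in
`C([-r,0],E) × C([-r,0],E)` such that `φ` is differentiable on `[-r,0]` with derivative `φ'`. -/
def C1sub (r : ℝ) (E : Type*) [NormedAddCommGroup E] [NormedSpace ℝ E] :
    Submodule ℝ (C(Icc0 r, E) × C(Icc0 r, E)) where
  carrier := {p | ∀ t ∈ Icc0 r, HasDerivWithinAt (extFun p.1) (extFun p.2 t) (Icc0 r) t}
  add_mem' := by
    intro p q hp hq t ht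
    have h := (hp t ht).add (hq t ht)
    have e1 : extFun (p + q).1 = fun s => extFun p.1 s + extFun q.1 s := by
      simp [Prod.fst_add, extFun_add]; rfl
    have e2 : extFun (p + q).2 t = extFun p.2 t + extFun q.2 t := by
      simp [Prod.snd_add, extFun_add]
    rw [e1, e2]; exact h
  zero_mem' := by
    intro t ht
    have e1 : extFun (0 : C(Icc0 r, E) × C(Icc0 r, E)).1 = fun _ : ℝ => (0 : E) := by
      simp [extFun_zero]; rfl
    have e2 : extFun (0 : C(Icc0 r, E) × C(Icc0 r, E)).2 t = 0 := by
      simp [extFun_zero]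
    rw [e1, e2]; exact hasDerivWithinAt_const _ _ _
  smul_mem' := by
    intro c p hp t ht
    have h := (hp t ht).const_smul c
    have e1 : extFun (c • p).1 = fun s => c • extFun p.1 s := by
      simp [Prod.smul_fst, extFun_smul]; rfl
    have e2 : extFun (c • p).2 t = c • extFun p.2 t := by
      simp [Prod.smul_snd, extFun_smul]
    rw [e1, e2]; exact h

/-- The Banach space `C¹([-r,0],E)`. -/
abbrev C1 (r : ℝ) (E : Type*) [NormedAddCommGroup E] [NormedSpace ℝ E] := ↥(C1sub r E)

section C1ops

variable {r : ℝ} {E : Type*} [NormedAddCommGroup E] [NormedSpace ℝ E]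

/-- Evaluation `φ(t)` of `φ ∈ C¹([-r,0],E)` (extended by `0` outside `[-r,0]`). -/
def evC (φ : C1 r E) (t : ℝ) : E := extFun φ.1.1 t

/-- Evaluation `φ'(t)` of the derivative of `φ ∈ C¹([-r,0],E)`. -/
def dvC (φ : C1 r E) (t : ℝ) : E := extFun φ.1.2 t

end C1ops

/-- The continuous linear map `ℝ → (Fin n → ℝ)` sending `x` to the vector `x·e_ν`. -/
def sCLM (n : ℕ) (ν : Fin n) : ℝ →L[ℝ] (Fin n → ℝ) :=
  ContinuousLinearMap.pi (fun j => if j = ν then ContinuousLinearMap.id ℝ ℝ else 0)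

/-- `ψ · e_ν` for a continuous map `ψ`. -/
def CMsingle {r : ℝ} {n : ℕ} (ν : Fin n) (φ : C(Icc0 r, ℝ)) : C(Icc0 r, Fin n → ℝ) :=
  ⟨fun t => sCLM n ν (φ t), (sCLM n ν).continuous.comp φ.continuous⟩

lemma extFun_CMsingle {r : ℝ} {n : ℕ} (ν : Fin n) (φ : C(Icc0 r, ℝ)) (t : ℝ) :
    extFun (CMsingle ν φ) t = sCLM n ν (extFun φ t) := by
  by_cases h : t ∈ Icc0 r <;> simp [extFun, CMsingle, h]

/-- `ψ · e_ν ∈ C¹([-r,0],ℝⁿ)` for a scalar function `ψ ∈ C¹([-r,0],ℝ)`. -/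
def singleC1 {r : ℝ} {n : ℕ} (ν : Fin n) (φ : C1 r ℝ) : C1 r (Fin n → ℝ) :=
  ⟨(CMsingle ν φ.1.1, CMsingle ν φ.1.2), by
    intro t ht
    have h := ((sCLM n ν).hasFDerivAt).comp_hasDerivWithinAt t (φ.2 t ht)
    have e1 : extFun (CMsingle ν φ.1.1) = (sCLM n ν) ∘ (extFun φ.1.1) := by
      funext s; exact extFun_CMsingle ν φ.1.1 s
    rw [show (CMsingle ν φ.1.1, CMsingle ν φ.1.2).1 = CMsingle ν φ.1.1 from rfl,
      show (CMsingle ν φ.1.1, CMsingle ν φ.1.2).2 = CMsingle ν φ.1.2 from rfl,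
      e1, extFun_CMsingle]
    exact h⟩

/-- The linear map `ℝⁿ → C¹([-r,0],ℝⁿ)`, `x ↦ Σ_ν x_ν ψ_ν · e_ν` (the map `Y·x`). -/
def Ymap {r : ℝ} {n : ℕ} (ψ : Fin n → C1 r ℝ) : (Fin n → ℝ) →ₗ[ℝ] C1 r (Fin n → ℝ) where
  toFun x := ∑ ν, x ν • singleC1 ν (ψ ν)
  map_add' x y := by simp [add_smul, Finset.sum_add_distrib]
  map_smul' c x := by simp [smul_smul, Finset.smul_sum]

/-- The closed subspace `X₀ = {φ ∈ C¹ : φ'(0) = 0}`. -/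
def X0sub (r : ℝ) (n : ℕ) : Submodule ℝ (C1 r (Fin n → ℝ)) where
  carrier := {φ | dvC φ 0 = 0}
  add_mem' := by
    intro φ ψ hφ hψ
    have : dvC (φ + ψ) 0 = dvC φ 0 + dvC ψ 0 := by
      simp [dvC, extFun_add]
    rw [Set.mem_setOf_eq] at *
    rw [this, hφ, hψ, add_zero]
  zero_mem' := by
    show dvC (0 : C1 r (Fin n → ℝ)) 0 = 0
    simp [dvC, extFun_zero]
  smul_mem' := by
    intro c φ hφ
    have : dvC (c • φ) 0 = c • dvC φ 0 := by simp [dvC, extFun_smul]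
    rw [Set.mem_setOf_eq] at *
    rw [this, hφ, smul_zero]

/-- The projection-like map `R φ = φ − Y·φ'(0)`. -/
def RKmap {r : ℝ} {n : ℕ} (ψ : Fin n → C1 r ℝ) (φ : C1 r (Fin n → ℝ)) : C1 r (Fin n → ℝ) :=
  φ - Ymap ψ (dvC φ 0)

section diffeos

variable {E : Type*} [NormedAddCommGroup E] [NormedSpace ℝ E]
variable {E' : Type*} [NormedAddCommGroup E'] [NormedSpace ℝ E']

/-- `f` defines a `C¹`-diffeomorphism from `s` onto `t`: `f` is continuously differentiable
on `s`, injective on `s`, maps `s` onto `t`, and has a continuously differentiable inverse. -/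
def IsC1DiffeoOn (f : E → E') (s : Set E) (t : Set E') : Prop :=
  ContDiffOn ℝ 1 f s ∧ Set.InjOn f s ∧ f '' s = t ∧
    ∃ g : E' → E, ContDiffOn ℝ 1 g t ∧ Set.InvOn g f s t

/-- The tangent cone of `X ⊆ E` at `x`: all velocities `c'(0)` of continuously differentiable
curves in `X` through `x`. -/
def tangentSet (X : Set E) (x : E) : Set E :=
  {v | ∃ (c : ℝ → E) (ε : ℝ), 0 < ε ∧ ContDiffOn ℝ 1 c (Set.Ioo (-ε) ε) ∧
      (∀ s ∈ Set.Ioo (-ε) ε, c s ∈ X) ∧ c 0 = x ∧ HasDerivWithinAt c v (Set.Ioo (-ε) ε) 0}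

/-- `X` is a continuously differentiable submanifold of codimension `m` of `E`. -/
def IsC1SubmanifoldCodim (X : Set E) (m : ℕ) : Prop :=
  ∀ x ∈ X, ∃ (O : Set E) (Φ : E → E) (H Q : Submodule ℝ E),
    IsOpen O ∧ x ∈ O ∧ IsClosed (H : Set E) ∧ IsCompl H Q ∧ Module.finrank ℝ Q = m ∧
    IsOpen (Φ '' O) ∧ IsC1DiffeoOn Φ O (Φ '' O) ∧ Φ '' (X ∩ O) = (H : Set E) ∩ (Φ '' O)

/-- `X` is a continuously differentiable submanifold of `E`. -/
def IsC1Submanifold (X : Set E) : Prop :=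
  ∀ x ∈ X, ∃ (O : Set E) (Φ : E → E) (H : Submodule ℝ E),
    IsOpen O ∧ x ∈ O ∧ IsClosed (H : Set E) ∧
    IsOpen (Φ '' O) ∧ IsC1DiffeoOn Φ O (Φ '' O) ∧ Φ '' (X ∩ O) = (H : Set E) ∩ (Φ '' O)

/-- `A` is an almost graph over `H`. -/
def IsAlmostGraphOver (A : Set E) (H : Set E) : Prop :=
  ∃ (dm : Set E) (α : E → E), dm ⊆ H ∧ ContDiffOn ℝ 1 α dm ∧
    (∀ ζ ∈ dm ∩ A, α ζ = 0) ∧ (∀ ζ ∈ dm \ A, α ζ ∉ H) ∧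
    IsC1DiffeoOn (fun ζ => ζ + α ζ) dm A

end diffeos

/-- The data of the delay differential system
`x'(t) = g(x(t-d_1(Lx_t)),…,x(t-d_kk(Lx_t)))`. -/
structure Setting (r : ℝ) (n kk : ℕ) (F : Type*) [NormedAddCommGroup F] [NormedSpace ℝ F] where
  /-- The continuous linear map `L : C([-r,0],ℝⁿ) → F`. -/
  L : C(Icc0 r, Fin n → ℝ) →L[ℝ] F
  /-- The open set `W ⊆ F`. -/
  W : Set F
  Wopen : IsOpen W
  /-- The delay functions `d_k : W → [0,r]`. -/
  d : Fin kk → F → ℝ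
  d_smooth : ∀ k, ContDiffOn ℝ 1 (d k) W
  d_mem : ∀ k, ∀ w ∈ W, d k w ∈ Set.Icc (0:ℝ) r
  /-- The open set `V ⊆ (ℝⁿ)^kk`. -/
  V : Set (Fin kk → Fin n → ℝ)
  Vopen : IsOpen V
  /-- The right hand side function `g : V → ℝⁿ`. -/
  g : (Fin kk → Fin n → ℝ) → Fin n → ℝ
  g_smooth : ContDiffOn ℝ 1 g V

namespace Setting

variable {r : ℝ} {n kk : ℕ} {F : Type*} [NormedAddCommGroup F] [NormedSpace ℝ F]
variable (S : Setting r n kk F)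

/-- `L` applied to (the `C⁰`-part of) `φ ∈ C¹`. -/
def Lof (φ : C1 r (Fin n → ℝ)) : F := S.L φ.1.1

/-- `φ̂ = (φ(-d_1(Lφ)),…,φ(-d_kk(Lφ)))`. -/
def hat (φ : C1 r (Fin n → ℝ)) : Fin kk → Fin n → ℝ := fun k => evC φ (-(S.d k (S.Lof φ)))

/-- The domain `U = {φ ∈ C¹ : Lφ ∈ W, φ̂ ∈ V}`. -/
def U : Set (C1 r (Fin n → ℝ)) := {φ | S.Lof φ ∈ S.W ∧ S.hat φ ∈ S.V}

/-- The right hand side `f(φ) = g(φ̂)`. -/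
def fmap (φ : C1 r (Fin n → ℝ)) : Fin n → ℝ := S.g (S.hat φ)

/-- The solution manifold `X_f = {φ ∈ U : φ'(0) = f(φ)}`. -/
def Xf : Set (C1 r (Fin n → ℝ)) := {φ | φ ∈ S.U ∧ dvC φ 0 = S.fmap φ}

/-- `W_J = {w ∈ W : d_j(w)=0 for j∈J, d_k(w)>0 for k∉J}`. -/
def WJ (J : Finset (Fin kk)) : Set F :=
  {w | w ∈ S.W ∧ (∀ j ∈ J, S.d j w = 0) ∧ ∀ k ∉ J, 0 < S.d k w}

/-- `W^J = {w ∈ W : d_k(w)>0 for k∉J}`. -/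
def WupJ (J : Finset (Fin kk)) : Set F :=
  {w | w ∈ S.W ∧ ∀ k ∉ J, 0 < S.d k w}

/-- `U_J = U ∩ L⁻¹(W_J)`. -/
def UJ (J : Finset (Fin kk)) : Set (C1 r (Fin n → ℝ)) := {φ | φ ∈ S.U ∧ S.Lof φ ∈ S.WJ J}

/-- `U^J = U ∩ L⁻¹(W^J)`. -/
def UupJ (J : Finset (Fin kk)) : Set (C1 r (Fin n → ℝ)) := {φ | φ ∈ S.U ∧ S.Lof φ ∈ S.WupJ J}

/-- `X_{fJ} = X_f ∩ U_J`. -/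
def XfJ (J : Finset (Fin kk)) : Set (C1 r (Fin n → ℝ)) := S.Xf ∩ S.UJ J

/-- Hypothesis (b): `g` is bounded. -/
def HypB : Prop := ∃ M, ∀ v ∈ S.V, ‖S.g v‖ ≤ M

/-- Hypothesis (d1b): `d₁ = 0` on `W` and `g` is bounded on subsets of `V` with bounded
first component. -/
def HypD1B (hk : 0 < kk) : Prop :=
  (∀ w ∈ S.W, S.d ⟨0, hk⟩ w = 0) ∧
  ∀ B : Set (Fin n → ℝ), Bornology.IsBounded B →
    Bornology.IsBounded (S.g '' {v | v ∈ S.V ∧ v ⟨0, hk⟩ ∈ B})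

/-- The partial derivative `∂_{(k-1)n+ν} g_μ (φ̂)`. -/
def dgCoeff (φ : C1 r (Fin n → ℝ)) (k : Fin kk) (ν : Fin n) (μ : Fin n) : ℝ :=
  fderivWithin ℝ S.g S.V (S.hat φ) (Pi.single k (Pi.single ν 1)) μ

/-- The right hand side of the formula for `Df_μ(φ)χ`. -/
def dFormula (φ χ : C1 r (Fin n → ℝ)) (μ : Fin n) : ℝ :=
  ∑ k, ∑ ν, S.dgCoeff φ k ν μ *
    (evC χ (-(S.d k (S.Lof φ))) ν -
      dvC φ (-(S.d k (S.Lof φ))) ν * fderivWithin ℝ (S.d k) S.W (S.Lof φ) (S.Lof χ))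

/-- The map `R^J(φ) = φ − Y_J(Lφ)·φ'(0)` of Section 4 of the paper. -/
def RJmap (y : Fin n → F → C1 r ℝ) (φ : C1 r (Fin n → ℝ)) : C1 r (Fin n → ℝ) :=
  φ - Ymap (fun ν => y ν (S.Lof φ)) (dvC φ 0)

end Setting



section Lemma22Aux

/-- `(max s 0)^2`. -/
def mfun (s : ℝ) : ℝ := (max s 0) ^ 2

lemma mfun_continuous : Continuous mfun := by
  unfold mfun; fun_prop

lemma mfun_hasDerivAt (s : ℝ) : HasDerivAt mfun (2 * max s 0) s := by
  rcases lt_trichotomy s 0 with hs | hs | hs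
  · have hev : (fun _ : ℝ => (0:ℝ)) =ᶠ[nhds s] mfun := by
      filter_upwards [Iio_mem_nhds hs] with y hy
      simp [mfun, max_eq_right (le_of_lt (mem_Iio.mp hy))]
    have h0 : HasDerivAt (fun _ : ℝ => (0:ℝ)) 0 s := hasDerivAt_const s 0
    have := h0.congr_of_eventuallyEq hev.symm
    simpa [max_eq_right hs.le] using this
  · subst hs
    rw [hasDerivAt_iff_tendsto_slope]
    have h1 : Filter.Tendsto (fun y : ℝ => max y 0) (nhdsWithin 0 {(0:ℝ)}ᶜ) (nhds (2 * max 0 0)) := by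
      have : Filter.Tendsto (fun y : ℝ => max y 0) (nhds 0) (nhds (max 0 0)) :=
        (continuous_id.max continuous_const).tendsto 0
      simpa using this.mono_left nhdsWithin_le_nhds
    refine h1.congr' ?_
    filter_upwards [self_mem_nhdsWithin] with y hy
    have hy0 : y ≠ 0 := hy
    rcases lt_or_ge y 0 with h | h
    · simp [slope_def_field, mfun, max_eq_right h.le]
    · have h' : max y 0 = y := max_eq_left h
      rw [slope_def_field]; simp only [mfun, h', max_self, sub_zero]; rw [eq_div_iff hy0]
      ring
  · have hev : (fun y : ℝ => y ^ 2) =ᶠ[nhds s] mfun := by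
      filter_upwards [Ioi_mem_nhds hs] with y hy
      simp [mfun, max_eq_left (le_of_lt (mem_Ioi.mp hy))]
    have h0 : HasDerivAt (fun y : ℝ => y ^ 2) (2 * s) s := by
      simpa using hasDerivAt_pow 2 s
    have := h0.congr_of_eventuallyEq hev.symm
    simpa [max_eq_left hs.le] using this

/-- The bump function `t ↦ t·(max(1+t/δ,0))²`. -/
def Ffun (δ t : ℝ) : ℝ := t * mfun (1 + t / δ)

/-- Its derivative. -/
def Fder (δ t : ℝ) : ℝ := mfun (1 + t / δ) + t * (2 * max (1 + t / δ) 0 * δ⁻¹)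

lemma Ffun_hasDerivAt (δ t : ℝ) : HasDerivAt (Ffun δ) (Fder δ t) t := by
  have hinner : HasDerivAt (fun y : ℝ => 1 + y / δ) δ⁻¹ t := by
    simpa [div_eq_mul_inv] using ((hasDerivAt_id t).div_const δ).const_add (1:ℝ)
  have hm : HasDerivAt (fun y : ℝ => mfun (1 + y / δ)) (2 * max (1 + t / δ) 0 * δ⁻¹) t :=
    by have := (mfun_hasDerivAt (1 + t / δ)).comp t hinner; exact this
  have h := (hasDerivAt_id t).fun_mul hm
  rw [show Ffun δ = fun i => i * mfun (1 + i / δ) from rfl]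
  simpa [Ffun, Fder, one_mul] using h

lemma Ffun_continuous (δ : ℝ) : Continuous (Ffun δ) :=
  continuous_id.mul (mfun_continuous.comp (continuous_const.add (continuous_id.div_const δ)))

lemma Fder_continuous (δ : ℝ) : Continuous (Fder δ) := by
  unfold Fder mfun; fun_prop

lemma Ffun_zero (δ : ℝ) : Ffun δ 0 = 0 := by simp [Ffun]

lemma Fder_zero (δ : ℝ) (hδ : 0 < δ) : Fder δ 0 = 1 := by
  simp [Fder, mfun]

lemma arg_nonpos {δ t : ℝ} (hδ : 0 < δ) (ht : t ≤ -δ) : 1 + t / δ ≤ 0 := by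
  have : t / δ ≤ -1 := by rw [div_le_iff₀ hδ]; linarith
  linarith

lemma Ffun_eq_zero {δ t : ℝ} (hδ : 0 < δ) (ht : t ≤ -δ) : Ffun δ t = 0 := by
  have h := arg_nonpos hδ ht
  simp [Ffun, mfun, max_eq_right h]

lemma Ffun_bound {δ t : ℝ} (hδ : 0 < δ) (ht : t ≤ 0) : |Ffun δ t| ≤ δ := by
  rcases le_or_gt t (-δ) with h | h
  · rw [Ffun_eq_zero hδ h]; simpa using hδ.le
  · have h1 : 1 + t / δ ≤ 1 := by
      have : t / δ ≤ 0 := div_nonpos_of_nonpos_of_nonneg ht hδ.le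
      linarith
    have hmax : max (1 + t / δ) 0 ≤ 1 := max_le h1 zero_le_one
    have hmf : mfun (1 + t / δ) ≤ 1 := by
      have := pow_le_one₀ (le_max_right _ _) hmax (n := 2)
      simpa [mfun] using this
    have hmf0 : 0 ≤ mfun (1 + t / δ) := by unfold mfun; positivity
    have htabs : |t| ≤ δ := by
      rw [abs_le]; constructor <;> linarith
    calc |Ffun δ t| = |t| * |mfun (1 + t / δ)| := abs_mul _ _
      _ ≤ δ * 1 := by
          apply mul_le_mul htabs _ (abs_nonneg _) hδ.le
          rwa [abs_of_nonneg hmf0]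
      _ = δ := mul_one δ

variable {r : ℝ}

/-- The bump function as an element of `C([-r,0],ℝ)`. -/
def PhiC (r δ : ℝ) : C(Icc0 r, ℝ) :=
  ⟨fun t => Ffun δ t.1, (Ffun_continuous δ).comp continuous_subtype_val⟩

/-- Its derivative as an element of `C([-r,0],ℝ)`. -/
def PhiC' (r δ : ℝ) : C(Icc0 r, ℝ) :=
  ⟨fun t => Fder δ t.1, (Fder_continuous δ).comp continuous_subtype_val⟩

lemma extFun_PhiC (δ : ℝ) {t : ℝ} (ht : t ∈ Icc0 r) : extFun (PhiC r δ) t = Ffun δ t := by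
  simp [extFun, PhiC, ht]

lemma extFun_PhiC' (δ : ℝ) {t : ℝ} (ht : t ∈ Icc0 r) : extFun (PhiC' r δ) t = Fder δ t := by
  simp [extFun, PhiC', ht]

/-- The bump function as an element of `C¹([-r,0],ℝ)`. -/
def PhiD (r δ : ℝ) : C1 r ℝ :=
  ⟨(PhiC r δ, PhiC' r δ), by
    intro t ht
    show HasDerivWithinAt (extFun (PhiC r δ)) (extFun (PhiC' r δ) t) (Icc0 r) t
    rw [extFun_PhiC' δ ht]
    refine ((Ffun_hasDerivAt δ t).hasDerivWithinAt).congr ?_ (extFun_PhiC δ ht)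
    intro s hs; exact extFun_PhiC δ hs⟩

/-- The combined linear map `φ ↦ (λφ, φ'(0))`. -/
def Tmap (r : ℝ) {q : ℕ} (lam : C(Icc0 r, ℝ) →L[ℝ] (Fin q → ℝ)) :
    C1 r ℝ →ₗ[ℝ] (Fin q → ℝ) × ℝ where
  toFun φ := (lam φ.1.1, dvC φ 0)
  map_add' φ ψ := by
    have h2 : dvC (φ + ψ) 0 = dvC φ 0 + dvC ψ 0 := by simp [dvC, extFun_add]
    simp [h2, Prod.ext_iff]
  map_smul' c φ := by
    have h2 : dvC (c • φ) 0 = c • dvC φ 0 := by simp [dvC, extFun_smul]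
    simp [h2, Prod.ext_iff]

/-- Evaluation at `t` as a linear map. -/
def Emap (r t : ℝ) : C1 r ℝ →ₗ[ℝ] ℝ where
  toFun φ := evC φ t
  map_add' φ ψ := by simp [evC, extFun_add]
  map_smul' c φ := by simp [evC, extFun_smul]

end Lemma22Aux

/-- Lemma 2.2: given a continuous linear map `λ : C → ℝ^q` and `z ∈ [-r,0)` there is
`φ ∈ C¹` with `φ'(0) = 1`, `λφ = 0` and `φ(t) = 0` on `[-r,z] ∪ {0}`. -/
theorem statement1 {r : ℝ} (hr : 0 < r) {q : ℕ}
    (lam : C(Icc0 r, ℝ) →L[ℝ] (Fin q → ℝ)) (z : ℝ) (hz : z ∈ Set.Ico (-r) 0) :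
    ∃ φ : C1 r ℝ, dvC φ 0 = 1 ∧ lam φ.1.1 = 0 ∧
      (∀ t ∈ Set.Icc (-r) z, evC φ t = 0) ∧ evC φ 0 = 0 := by
  have hz0 : z < 0 := hz.2
  set δ0 : ℝ := -z with hδ0def
  have hδ0 : 0 < δ0 := by simp [hδ0def]; linarith
  set δs : ℕ → ℝ := fun m => δ0 / (m + 1) with hδsdef
  have hδpos : ∀ m, 0 < δs m := fun m => div_pos hδ0 (by positivity)
  have hδle : ∀ m, δs m ≤ δ0 := by
    intro m
    rw [hδsdef]
    apply div_le_self hδ0.le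
    simp [le_add_iff_nonneg_left]
  have h0mem : (0 : ℝ) ∈ Icc0 r := ⟨by linarith, le_refl 0⟩
  set v : ℕ → (Fin q → ℝ) × ℝ := fun m => (lam (PhiC r (δs m)), 1) with hvdef
  -- T applied to PhiD gives v
  have hTv : ∀ m, Tmap r lam (PhiD r (δs m)) = v m := by
    intro m
    have h2 : dvC (PhiD r (δs m)) 0 = 1 := by
      show extFun (PhiC' r (δs m)) 0 = 1
      rw [extFun_PhiC' _ h0mem, Fder_zero _ (hδpos m)]
    have h1 : (PhiD r (δs m)).1.1 = PhiC r (δs m) := rfl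
    show (lam (PhiD r (δs m)).1.1, dvC (PhiD r (δs m)) 0) = v m
    rw [h1, h2]
  -- the limit (0,1) lies in the span of the v m
  have hlim : Filter.Tendsto v Filter.atTop (nhds ((0 : Fin q → ℝ), (1 : ℝ))) := by
    refine Filter.Tendsto.prodMk_nhds ?_ tendsto_const_nhds
    have hb : ∀ m, ‖lam (PhiC r (δs m))‖ ≤ ‖lam‖ * δs m := by
      intro m
      calc ‖lam (PhiC r (δs m))‖ ≤ ‖lam‖ * ‖PhiC r (δs m)‖ := lam.le_opNorm _
        _ ≤ ‖lam‖ * δs m := by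
            have hn : ‖PhiC r (δs m)‖ ≤ δs m := by
              apply (ContinuousMap.norm_le _ (hδpos m).le).mpr
              intro x
              simpa [PhiC] using Ffun_bound (hδpos m) x.2.2
            exact mul_le_mul_of_nonneg_left hn (ContinuousLinearMap.opNorm_nonneg lam)
    have hto : Filter.Tendsto (fun m : ℕ => ‖lam‖ * δs m) Filter.atTop (nhds 0) := by
      have h1 : Filter.Tendsto (fun m : ℕ => δ0 / (m + 1)) Filter.atTop (nhds 0) := by
        apply Filter.Tendsto.div_atTop tendsto_const_nhds
        exact Filter.tendsto_atTop_add_const_right _ 1 tendsto_natCast_atTop_atTop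
      simpa using (h1.const_mul ‖lam‖)
    exact squeeze_zero_norm hb hto
  have hspan : ((0 : Fin q → ℝ), (1 : ℝ)) ∈ Submodule.span ℝ (Set.range v) := by
    have hclosed : IsClosed (Submodule.span ℝ (Set.range v) : Set ((Fin q → ℝ) × ℝ)) :=
      Submodule.closed_of_finiteDimensional _
    exact hclosed.mem_of_tendsto hlim
      (Filter.Eventually.of_forall fun m => Submodule.subset_span ⟨m, rfl⟩)
  rw [Finsupp.mem_span_range_iff_exists_finsupp] at hspan
  obtain ⟨c, hc⟩ := hspan
  refine ⟨c.sum fun m a => a • PhiD r (δs m), ?_, ?_, ?_, ?_⟩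
  case _ =>
    have := map_finsuppSum (Tmap r lam) c (fun m a => a • PhiD r (δs m))
    simp only [map_smul, hTv] at this
    rw [hc] at this
    have h2 := congrArg Prod.snd this
    simpa [Tmap] using h2
  case _ =>
    have := map_finsuppSum (Tmap r lam) c (fun m a => a • PhiD r (δs m))
    simp only [map_smul, hTv] at this
    rw [hc] at this
    have h1 := congrArg Prod.fst this
    simpa [Tmap] using h1
  case _ =>
    intro t ht
    have htmem : t ∈ Icc0 r := ⟨ht.1, le_trans ht.2 hz0.le⟩
    have hzero : ∀ m, evC (PhiD r (δs m)) t = 0 := by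
      intro m
      show extFun (PhiC r (δs m)) t = 0
      rw [extFun_PhiC _ htmem]
      apply Ffun_eq_zero (hδpos m)
      have : -δ0 ≤ -δs m := neg_le_neg (hδle m)
      calc t ≤ z := ht.2
        _ = -δ0 := by rw [hδ0def, neg_neg]
        _ ≤ -δs m := this
    have := map_finsuppSum (Emap r t) c (fun m a => a • PhiD r (δs m))
    simp only [map_smul] at this
    have heq : ∀ (m : ℕ) (a : ℝ), a • (Emap r t) (PhiD r (δs m)) = 0 := by
      intro m a
      show a • evC (PhiD r (δs m)) t = 0
      rw [hzero m, smul_zero]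
    calc evC (c.sum fun m a => a • PhiD r (δs m)) t
        = (Emap r t) (c.sum fun m a => a • PhiD r (δs m)) := rfl
      _ = c.sum fun m a => a • (Emap r t) (PhiD r (δs m)) := this
      _ = 0 := by
          have h0 : (c.sum fun m a => a • (Emap r t) (PhiD r (δs m))) = c.sum fun _ _ => (0:ℝ) :=
            Finsupp.sum_congr fun m _ => heq m (c m)
          rw [h0]; simp
  case _ =>
    have hzero : ∀ m, evC (PhiD r (δs m)) 0 = 0 := by
      intro m
      show extFun (PhiC r (δs m)) 0 = 0
      rw [extFun_PhiC _ h0mem, Ffun_zero]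
    have := map_finsuppSum (Emap r 0) c (fun m a => a • PhiD r (δs m))
    simp only [map_smul] at this
    have heq : ∀ (m : ℕ) (a : ℝ), a • (Emap r 0) (PhiD r (δs m)) = 0 := by
      intro m a
      show a • evC (PhiD r (δs m)) 0 = 0
      rw [hzero m, smul_zero]
    calc evC (c.sum fun m a => a • PhiD r (δs m)) 0
        = (Emap r 0) (c.sum fun m a => a • PhiD r (δs m)) := rfl
      _ = c.sum fun m a => a • (Emap r 0) (PhiD r (δs m)) := this
      _ = 0 := by
          have h0 : (c.sum fun m a => a • (Emap r 0) (PhiD r (δs m))) = c.sum fun _ _ => (0:ℝ) :=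
            Finsupp.sum_congr fun m _ => heq m (c m)
          rw [h0]; simp
end
end

section
/- The restriction of R^K to X_{fK} is injective, and for every φ∈X_{fK} the map R^K defines a (topological) isomorphism from the tangent space T_φX_f onto X_0. -/
set_option linter.unusedSectionVars false

open Set

noncomputable section

/-! ### Auxiliary lemmas -/

instance C1bs (r : ℝ) (E : Type*) [NormedAddCommGroup E] [NormedSpace ℝ E] :
    IsBoundedSMul ℝ (C1 r E) :=
  @NormedSpace.toIsBoundedSMul ℝ (C1 r E) _ _ (C1sub r E).normedSpace

section MyHelpers

open Filter Asymptotics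

variable {r : ℝ} {E : Type*} [NormedAddCommGroup E] [NormedSpace ℝ E]

lemma evC_apply (φ : C1 r E) {t : ℝ} (h : t ∈ Icc0 r) : evC φ t = φ.1.1 ⟨t, h⟩ := by
  simp [evC, extFun, h]

lemma dvC_apply (φ : C1 r E) {t : ℝ} (h : t ∈ Icc0 r) : dvC φ t = φ.1.2 ⟨t, h⟩ := by
  simp [dvC, extFun, h]

@[simp] lemma evC_add (φ ψ : C1 r E) (t : ℝ) : evC (φ + ψ) t = evC φ t + evC ψ t := by
  unfold evC extFun
  by_cases h : t ∈ Icc0 r <;> simp [h]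

@[simp] lemma evC_smul (c : ℝ) (φ : C1 r E) (t : ℝ) : evC (c • φ) t = c • evC φ t := by
  unfold evC extFun
  by_cases h : t ∈ Icc0 r <;> simp [h]

@[simp] lemma evC_neg (φ : C1 r E) (t : ℝ) : evC (-φ) t = - evC φ t := by
  have h : -φ = (-1 : ℝ) • φ := by module
  rw [h, evC_smul]; simp

@[simp] lemma evC_sub (φ ψ : C1 r E) (t : ℝ) : evC (φ - ψ) t = evC φ t - evC ψ t := by
  rw [sub_eq_add_neg, evC_add, evC_neg, sub_eq_add_neg]

@[simp] lemma evC_zero (t : ℝ) : evC (0 : C1 r E) t = 0 := by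
  have h : (0 : C1 r E) = (0 : ℝ) • (0 : C1 r E) := by module
  rw [h, evC_smul]; simp

@[simp] lemma dvC_add (φ ψ : C1 r E) (t : ℝ) : dvC (φ + ψ) t = dvC φ t + dvC ψ t := by
  unfold dvC extFun
  by_cases h : t ∈ Icc0 r <;> simp [h]

@[simp] lemma dvC_smul (c : ℝ) (φ : C1 r E) (t : ℝ) : dvC (c • φ) t = c • dvC φ t := by
  unfold dvC extFun
  by_cases h : t ∈ Icc0 r <;> simp [h]

@[simp] lemma dvC_neg (φ : C1 r E) (t : ℝ) : dvC (-φ) t = - dvC φ t := by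
  have h : -φ = (-1 : ℝ) • φ := by module
  rw [h, dvC_smul]; simp

@[simp] lemma dvC_sub (φ ψ : C1 r E) (t : ℝ) : dvC (φ - ψ) t = dvC φ t - dvC ψ t := by
  rw [sub_eq_add_neg, dvC_add, dvC_neg, sub_eq_add_neg]

@[simp] lemma dvC_zero (t : ℝ) : dvC (0 : C1 r E) t = 0 := by
  have h : (0 : C1 r E) = (0 : ℝ) • (0 : C1 r E) := by module
  rw [h, dvC_smul]; simp

lemma norm_evC_le (φ : C1 r E) (t : ℝ) : ‖evC φ t‖ ≤ ‖φ‖ := by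
  by_cases h : t ∈ Icc0 r
  · rw [evC_apply φ h]
    calc ‖φ.1.1 ⟨t, h⟩‖ ≤ ‖φ.1.1‖ := φ.1.1.norm_coe_le_norm _
      _ ≤ ‖φ.1‖ := norm_fst_le _
      _ = ‖φ‖ := rfl
  · simp [evC, extFun, h]

lemma norm_dvC_le (φ : C1 r E) (t : ℝ) : ‖dvC φ t‖ ≤ ‖φ‖ := by
  by_cases h : t ∈ Icc0 r
  · rw [dvC_apply φ h]
    calc ‖φ.1.2 ⟨t, h⟩‖ ≤ ‖φ.1.2‖ := φ.1.2.norm_coe_le_norm _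
      _ ≤ ‖φ.1‖ := norm_snd_le _
      _ = ‖φ‖ := rfl
  · simp [dvC, extFun, h]

lemma evC_lipschitz (φ : C1 r E) {a b : ℝ} (ha : a ∈ Icc0 r) (hb : b ∈ Icc0 r) :
    ‖evC φ a - evC φ b‖ ≤ ‖φ‖ * |a - b| := by
  have := (convex_Icc (-r) (0:ℝ)).norm_image_sub_le_of_norm_hasDerivWithin_le
    (f := extFun φ.1.1) (f' := extFun φ.1.2) (C := ‖φ‖)
    (fun x hx => φ.2 x hx) (fun x hx => norm_dvC_le φ x) hb ha
  rw [Real.norm_eq_abs] at this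
  exact this

/-- Transfer of derivatives along a bounded linear operation on `C1`. -/
lemma hasDerivAt_comp_boundedLinear {G : Type*} [NormedAddCommGroup G] [NormedSpace ℝ G]
    (T : C1 r E → G) (hadd : ∀ p q, T (p + q) = T p + T q)
    (hsmul : ∀ (c : ℝ) p, T (c • p) = c • T p)
    (C : ℝ) (hC : ∀ p, ‖T p‖ ≤ C * ‖p‖)
    {c : ℝ → C1 r E} {v : C1 r E} {s₀ : ℝ} (hc : HasDerivAt c v s₀) :
    HasDerivAt (fun s => T (c s)) (T v) s₀ := by
  have hsub : ∀ p q, T (p - q) = T p - T q := by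
    intro p q
    have hneg : T (-q) = - T q := by
      have h : -q = (-1 : ℝ) • q := by module
      rw [h, hsmul]; simp
    rw [sub_eq_add_neg, hadd, hneg, sub_eq_add_neg]
  rw [hasDerivAt_iff_isLittleO]
  replace hc := (hasDerivAt_iff_isLittleO (F := C1 r E) (f := c) (f' := v) (x := s₀)).1 hc
  have key : (fun s => T (c s) - T (c s₀) - (s - s₀) • T v)
      = fun s => T (c s - c s₀ - (s - s₀) • v) := by
    funext s
    rw [hsub, hsub, hsmul]
  rw [key]
  refine IsBigO.trans_isLittleO ?_ hc
  refine isBigO_iff.2 ⟨C, Eventually.of_forall fun s => ?_⟩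
  exact hC _

lemma continuousOn_extFun (f : C(Icc0 r, E)) : ContinuousOn (extFun f) (Icc0 r) := by
  rw [continuousOn_iff_continuous_restrict]
  have : (Icc0 r).restrict (extFun f) = fun x => f x := by
    funext x
    show extFun f x = f x
    simp [extFun, x.2]
  rw [show (Icc0 r).domRestrict (extFun f) = (Icc0 r).restrict (extFun f) from rfl, this]
  exact f.continuous

lemma continuousOn_extFun_comp (f : C(Icc0 r, E)) {t : ℝ → ℝ} {O : Set ℝ}
    (htc : ContinuousOn t O) (hmem : ∀ s ∈ O, t s ∈ Set.Icc (0:ℝ) r) :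
    ContinuousOn (fun s => extFun f (-(t s))) O := by
  refine (continuousOn_extFun f).comp htc.neg fun s hs => ?_
  exact ⟨neg_le_neg (hmem s hs).2, neg_nonpos.2 (hmem s hs).1⟩

/-- Squeeze lemma: if `t` has derivative `0` at `s₀` and `t s₀ = 0`, with values in `[0,r]`,
then `s ↦ φ(-t s)` has derivative `0` at `s₀`. -/
lemma hasDerivAt_evC_comp_zero {φ : C1 r E} {t : ℝ → ℝ} {s₀ : ℝ}
    (ht : ∀ᶠ s in nhds s₀, t s ∈ Set.Icc (0:ℝ) r) (ht0 : t s₀ = 0)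
    (htd : HasDerivAt t 0 s₀) :
    HasDerivAt (fun s => evC φ (-(t s))) 0 s₀ := by
  have hr0 : 0 ≤ r := by
    rcases ht.exists with ⟨s, hs⟩
    exact le_trans hs.1 hs.2
  rw [hasDerivAt_iff_isLittleO]
  have h1 : (fun s => evC φ (-(t s)) - evC φ (-(t s₀)) - (s - s₀) • (0 : E))
      = fun s => evC φ (-(t s)) - evC φ (-(t s₀)) := by
    funext s; rw [smul_zero, sub_zero]
  rw [h1]
  have h2 : (fun s => evC φ (-(t s)) - evC φ (-(t s₀))) =O[nhds s₀] (fun s => t s - t s₀) := by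
    refine isBigO_iff.2 ⟨‖φ‖, ?_⟩
    filter_upwards [ht] with s hs
    have hmem : -(t s) ∈ Icc0 r := ⟨neg_le_neg hs.2, neg_nonpos.2 hs.1⟩
    have hmem0 : -(t s₀) ∈ Icc0 r := by
      rw [ht0]; exact ⟨by simpa using hr0, by simp⟩
    have := evC_lipschitz φ hmem hmem0
    calc ‖evC φ (-(t s)) - evC φ (-(t s₀))‖ ≤ ‖φ‖ * |(-(t s)) - (-(t s₀))| := this
      _ = ‖φ‖ * ‖t s - t s₀‖ := by rw [Real.norm_eq_abs, abs_sub_comm]; ring_nf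
  refine h2.trans_isLittleO ?_
  have := hasDerivAt_iff_isLittleO.1 htd
  simpa using this

/-- Chain rule for `s ↦ φ(-t s)` at interior points. -/
lemma hasDerivAt_evC_comp_interior (hr : 0 < r) {φ : C1 r E} {t : ℝ → ℝ} {s₀ : ℝ} {t' : ℝ}
    (htd : HasDerivAt t t' s₀) (h0 : 0 < t s₀) (h1 : t s₀ < r) :
    HasDerivAt (fun s => evC φ (-(t s))) ((-t') • dvC φ (-(t s₀))) s₀ := by
  have hmem : -(t s₀) ∈ Icc0 r := ⟨neg_le_neg h1.le, neg_nonpos.2 h0.le⟩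
  have hin : HasDerivWithinAt (extFun φ.1.1) (extFun φ.1.2 (-(t s₀))) (Icc0 r) (-(t s₀)) :=
    φ.2 _ hmem
  have hnb : Icc0 r ∈ nhds (-(t s₀)) := Icc_mem_nhds (by linarith) (by linarith)
  have hat : HasDerivAt (extFun φ.1.1) (dvC φ (-(t s₀))) (-(t s₀)) := hin.hasDerivAt hnb
  have := HasDerivAt.scomp (x := s₀) hat htd.neg
  exact this

end MyHelpers

section MyHelpers2

open Filter Asymptotics

variable {r : ℝ} {E : Type*} [NormedAddCommGroup E] [NormedSpace ℝ E]

/-- `C¹`-smoothness of `s ↦ φ(-t s)` for `t` with values in `[0,r)`. -/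
lemma contDiffOn_evC_comp (hr : 0 < r) (φ : C1 r E) {t : ℝ → ℝ} {O : Set ℝ} (hO : IsOpen O)
    (ht : ContDiffOn ℝ 1 t O) (hmem : ∀ s ∈ O, t s ∈ Set.Icc (0:ℝ) r)
    (hlt : ∀ s ∈ O, t s < r) :
    ContDiffOn ℝ 1 (fun s => evC φ (-(t s))) O := by
  have hder : ∀ s ∈ O, HasDerivAt (fun σ => evC φ (-(t σ)))
      ((-(deriv t s)) • dvC φ (-(t s))) s := by
    intro s hs
    have htds : HasDerivAt t (deriv t s) s :=
      ((ht.contDiffAt (hO.mem_nhds hs)).differentiableAt one_ne_zero).hasDerivAt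
    rcases eq_or_lt_of_le (hmem s hs).1 with h0 | h0
    · -- boundary case `t s = 0`
      have hmin : IsLocalMin t s := by
        filter_upwards [hO.mem_nhds hs] with σ hσ
        rw [← h0]; exact (hmem σ hσ).1
      have hd0 : deriv t s = 0 := hmin.deriv_eq_zero
      have := hasDerivAt_evC_comp_zero (φ := φ)
        (Filter.eventually_of_mem (hO.mem_nhds hs) (fun σ hσ => hmem σ hσ)) h0.symm (by rw [← hd0]; exact htds)
      rw [hd0]
      simpa using this
    · exact hasDerivAt_evC_comp_interior hr htds h0 (hlt s hs)
  have h1eq : (1 : WithTop ℕ∞) = (0 : ℕ) + 1 := by norm_num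
  rw [h1eq, contDiffOn_succ_iff_deriv_of_isOpen hO]
  refine ⟨fun s hs => ((hder s hs).differentiableAt).differentiableWithinAt, ?_, ?_⟩
  · intro h; exact absurd h (by simp)
  · rw [show ((0:ℕ) : WithTop ℕ∞) = 0 from rfl, contDiffOn_zero]
    have heq : ∀ s ∈ O, deriv (fun σ => evC φ (-(t σ))) s
        = (-(deriv t s)) • dvC φ (-(t s)) := fun s hs => (hder s hs).deriv
    refine ContinuousOn.congr ?_ heq
    have hc1 : ContinuousOn (fun s => -(deriv t s)) O := by
      have := ht.continuousOn_deriv_of_isOpen hO le_rfl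
      exact this.neg
    have hc2 : ContinuousOn (fun s => dvC φ (-(t s))) O :=
      continuousOn_extFun_comp φ.1.2 (ht.continuousOn) hmem
    exact hc1.smul hc2

variable {n : ℕ}

lemma sCLM_apply (ν : Fin n) (x : ℝ) (μ : Fin n) :
    sCLM n ν x μ = if μ = ν then x else 0 := by
  simp only [sCLM, ContinuousLinearMap.pi_apply]
  split_ifs with h <;> simp [h]

lemma evC_singleC1 {r : ℝ} (ν : Fin n) (f : C1 r ℝ) (t : ℝ) :
    evC (singleC1 ν f) t = sCLM n ν (evC f t) :=
  extFun_CMsingle ν f.1.1 t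

lemma dvC_singleC1 {r : ℝ} (ν : Fin n) (f : C1 r ℝ) (t : ℝ) :
    dvC (singleC1 ν f) t = sCLM n ν (dvC f t) :=
  extFun_CMsingle ν f.1.2 t

lemma evC_sum {r : ℝ} {ι : Type*} (s : Finset ι) (g : ι → C1 r E) (t : ℝ) :
    evC (∑ i ∈ s, g i) t = ∑ i ∈ s, evC (g i) t :=
  map_sum (AddMonoidHom.mk' (fun φ : C1 r E => evC φ t) (fun p q => evC_add p q t)) g s

lemma dvC_sum {r : ℝ} {ι : Type*} (s : Finset ι) (g : ι → C1 r E) (t : ℝ) :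
    dvC (∑ i ∈ s, g i) t = ∑ i ∈ s, dvC (g i) t :=
  map_sum (AddMonoidHom.mk' (fun φ : C1 r E => dvC φ t) (fun p q => dvC_add p q t)) g s

lemma evC_Ymap {r : ℝ} (ψ : Fin n → C1 r ℝ) (x : Fin n → ℝ) (t : ℝ) :
    evC (Ymap ψ x) t = fun μ => x μ * evC (ψ μ) t := by
  funext μ
  have h : Ymap ψ x = ∑ ν, x ν • singleC1 ν (ψ ν) := rfl
  rw [h, evC_sum]
  have : ∀ ν, evC (x ν • singleC1 ν (ψ ν)) t μ = if μ = ν then x ν * evC (ψ ν) t else 0 := by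
    intro ν
    rw [evC_smul, evC_singleC1]
    simp only [Pi.smul_apply, sCLM_apply, smul_eq_mul]
    split_ifs <;> ring
  calc (∑ ν, evC (x ν • singleC1 ν (ψ ν)) t) μ
      = ∑ ν, evC (x ν • singleC1 ν (ψ ν)) t μ := by rw [Finset.sum_apply]
    _ = ∑ ν, if μ = ν then x ν * evC (ψ ν) t else 0 := Finset.sum_congr rfl fun ν _ => this ν
    _ = x μ * evC (ψ μ) t := by rw [Finset.sum_ite_eq]; simp

lemma dvC_Ymap {r : ℝ} (ψ : Fin n → C1 r ℝ) (x : Fin n → ℝ) (t : ℝ) :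
    dvC (Ymap ψ x) t = fun μ => x μ * dvC (ψ μ) t := by
  funext μ
  have h : Ymap ψ x = ∑ ν, x ν • singleC1 ν (ψ ν) := rfl
  rw [h, dvC_sum]
  have : ∀ ν, dvC (x ν • singleC1 ν (ψ ν)) t μ = if μ = ν then x ν * dvC (ψ ν) t else 0 := by
    intro ν
    rw [dvC_smul, dvC_singleC1]
    simp only [Pi.smul_apply, sCLM_apply, smul_eq_mul]
    split_ifs <;> ring
  calc (∑ ν, dvC (x ν • singleC1 ν (ψ ν)) t) μ
      = ∑ ν, dvC (x ν • singleC1 ν (ψ ν)) t μ := by rw [Finset.sum_apply]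
    _ = ∑ ν, if μ = ν then x ν * dvC (ψ ν) t else 0 := Finset.sum_congr rfl fun ν _ => this ν
    _ = x μ * dvC (ψ μ) t := by rw [Finset.sum_ite_eq]; simp

end MyHelpers2

set_option synthInstance.maxHeartbeats 1000000
set_option maxHeartbeats 1000000

section MyHelpers3

open Filter Asymptotics

variable {r : ℝ} {n kk : ℕ} {F : Type*} [NormedAddCommGroup F] [NormedSpace ℝ F]
variable (S : Setting r n kk F)

lemma Lof_add (φ ψ : C1 r (Fin n → ℝ)) : S.Lof (φ + ψ) = S.Lof φ + S.Lof ψ := by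
  unfold Setting.Lof
  have h : (φ + ψ).1.1 = φ.1.1 + ψ.1.1 := rfl
  rw [h, map_add]

lemma Lof_smul (c : ℝ) (φ : C1 r (Fin n → ℝ)) : S.Lof (c • φ) = c • S.Lof φ := by
  unfold Setting.Lof
  have h : (c • φ).1.1 = c • φ.1.1 := rfl
  rw [h, map_smul]

lemma Lof_sub (φ ψ : C1 r (Fin n → ℝ)) : S.Lof (φ - ψ) = S.Lof φ - S.Lof ψ := by
  unfold Setting.Lof
  have h : (φ - ψ).1.1 = φ.1.1 - ψ.1.1 := rfl
  rw [h, map_sub]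

lemma norm_Lof_le (φ : C1 r (Fin n → ℝ)) : ‖S.Lof φ‖ ≤ ‖S.L‖ * ‖φ‖ := by
  unfold Setting.Lof
  calc ‖S.L φ.1.1‖ ≤ ‖S.L‖ * ‖φ.1.1‖ := S.L.le_opNorm _
    _ ≤ ‖S.L‖ * ‖φ‖ := by
        exact mul_le_mul_of_nonneg_left (le_trans (norm_fst_le _) le_rfl) (norm_nonneg S.L)

lemma Lof_Ymap (ψ : Fin n → C1 r ℝ) (hψL : ∀ ν, S.L (singleC1 ν (ψ ν)).1.1 = 0)
    (x : Fin n → ℝ) : S.Lof (Ymap ψ x) = 0 := by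
  have h : Ymap ψ x = ∑ ν, x ν • singleC1 ν (ψ ν) := rfl
  rw [h]
  unfold Setting.Lof
  have hsum : ((∑ ν, x ν • singleC1 ν (ψ ν) : C1 r (Fin n → ℝ))).1.1
      = ∑ ν, x ν • (singleC1 ν (ψ ν)).1.1 := by
    have h1 := map_sum (AddMonoidHom.mk' (fun φ : C1 r (Fin n → ℝ) => φ.1.1) (fun p q => rfl))
      (fun ν => x ν • singleC1 ν (ψ ν)) Finset.univ
    exact h1
  rw [hsum, map_sum]
  refine Finset.sum_eq_zero fun ν _ => ?_
  rw [map_smul, hψL ν, smul_zero]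

end MyHelpers3

section MyClaims

open Filter Asymptotics

variable {r : ℝ} {n kk : ℕ} {F : Type*} [NormedAddCommGroup F] [NormedSpace ℝ F]

lemma claimC (hr : 0 < r) (S : Setting r n kk F) {φ : C1 r (Fin n → ℝ)}
    (hW : S.Lof φ ∈ S.W) (hV : S.hat φ ∈ S.V) (hd0 : ∀ k, S.d k (S.Lof φ) = 0)
    {v : C1 r (Fin n → ℝ)} (hv : v ∈ tangentSet S.Xf φ) :
    dvC v 0 = fderiv ℝ S.g (S.hat φ) (fun _ => evC v 0) := by
  classical
  obtain ⟨c, ε, hε, hcd, hcX, hc0, hcv⟩ := hv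
  have hIoo : Set.Ioo (-ε) ε ∈ nhds (0:ℝ) := Ioo_mem_nhds (by linarith) hε
  have hcv' : HasDerivAt c v 0 := hcv.hasDerivAt hIoo
  have hdvc : HasDerivAt (fun s => dvC (c s) 0) (dvC v 0) 0 :=
    hasDerivAt_comp_boundedLinear (fun p => dvC p 0) (fun p q => dvC_add p q 0)
      (fun a p => dvC_smul a p 0) 1 (fun p => by simpa using norm_dvC_le p 0) hcv'
  have hevc : HasDerivAt (fun s => evC (c s) 0) (evC v 0) 0 :=
    hasDerivAt_comp_boundedLinear (fun p => evC p 0) (fun p q => evC_add p q 0)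
      (fun a p => evC_smul a p 0) 1 (fun p => by rw [one_mul]; exact norm_evC_le p 0) hcv'
  have hLc : HasDerivAt (fun s => S.Lof (c s)) (S.Lof v) 0 :=
    hasDerivAt_comp_boundedLinear S.Lof (Lof_add S) (Lof_smul S) ‖S.L‖ (norm_Lof_le S) hcv'
  have hgB : HasFDerivAt S.g (fderiv ℝ S.g (S.hat φ)) (S.hat φ) :=
    ((S.g_smooth.contDiffAt (S.Vopen.mem_nhds hV)).differentiableAt one_ne_zero).hasFDerivAt
  have hXev : ∀ᶠ s in nhds (0:ℝ), c s ∈ S.Xf := Filter.eventually_of_mem hIoo hcX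
  have hWev : ∀ᶠ s in nhds (0:ℝ), S.Lof (c s) ∈ S.W := hXev.mono fun s hs => hs.1.1
  have hhat : HasDerivAt (fun s => S.hat (c s)) (fun _ => evC v 0) 0 := by
    rw [hasDerivAt_pi]
    intro k
    have htmemev : ∀ᶠ s in nhds (0:ℝ), S.d k (S.Lof (c s)) ∈ Set.Icc (0:ℝ) r :=
      hWev.mono fun s hs => S.d_mem k _ hs
    have ht0 : S.d k (S.Lof (c 0)) = 0 := by rw [hc0]; exact hd0 k
    have hdk : HasFDerivAt (S.d k) (fderiv ℝ (S.d k) (S.Lof φ)) (S.Lof φ) :=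
      (((S.d_smooth k).contDiffAt (S.Wopen.mem_nhds hW)).differentiableAt one_ne_zero).hasFDerivAt
    have hmin : IsLocalMin (S.d k) (S.Lof φ) := by
      filter_upwards [S.Wopen.mem_nhds hW] with w hw
      rw [hd0 k]; exact (S.d_mem k w hw).1
    have hdz : fderiv ℝ (S.d k) (S.Lof φ) = 0 := hmin.hasFDerivAt_eq_zero hdk
    have hLc0 : S.Lof (c 0) = S.Lof φ := by rw [hc0]
    have hdk' : HasFDerivAt (S.d k) (fderiv ℝ (S.d k) (S.Lof φ)) (S.Lof (c 0)) := by
      rw [hLc0]; exact hdk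
    have htd : HasDerivAt (fun s => S.d k (S.Lof (c s))) 0 0 := by
      have h := hdk'.comp_hasDerivAt 0 hLc
      rw [hdz] at h
      simp at h
      exact h
    have htlo : (fun s => S.d k (S.Lof (c s))) =o[nhds (0:ℝ)] (fun s : ℝ => s) := by
      have h := hasDerivAt_iff_isLittleO.1 htd
      simpa [ht0] using h
    have hM : ∀ᶠ s in nhds (0:ℝ), ‖c s‖ ≤ ‖φ‖ + 1 := by
      have hcont : ContinuousAt c 0 := hcv'.continuousAt
      have h1 : ∀ᶠ s in nhds (0:ℝ), dist (c s) (c 0) < 1 :=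
        hcont (Metric.ball_mem_nhds (c 0) one_pos)
      filter_upwards [h1] with s hs
      have h2 : ‖c s‖ - ‖c 0‖ ≤ ‖c s - c 0‖ := norm_sub_norm_le _ _
      rw [dist_eq_norm] at hs
      rw [hc0] at h2 hs
      linarith [lt_of_le_of_lt h2 hs]
    have hfirst : (fun s => evC (c s) (-(S.d k (S.Lof (c s)))) - evC (c s) 0)
        =o[nhds (0:ℝ)] (fun s : ℝ => s) := by
      refine IsBigO.trans_isLittleO ?_ htlo
      refine isBigO_iff.2 ⟨‖φ‖ + 1, ?_⟩
      filter_upwards [htmemev, hM] with s hs hMs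
      have hmem1 : -(S.d k (S.Lof (c s))) ∈ Icc0 r := ⟨neg_le_neg hs.2, neg_nonpos.2 hs.1⟩
      have hmem0 : (0:ℝ) ∈ Icc0 r := ⟨by linarith, le_rfl⟩
      have hl := evC_lipschitz (c s) hmem1 hmem0
      calc ‖evC (c s) (-(S.d k (S.Lof (c s)))) - evC (c s) 0‖
          ≤ ‖c s‖ * |(-(S.d k (S.Lof (c s)))) - 0| := hl
        _ ≤ (‖φ‖ + 1) * ‖S.d k (S.Lof (c s))‖ := by
            rw [sub_zero, abs_neg, Real.norm_eq_abs]
            exact mul_le_mul_of_nonneg_right hMs (abs_nonneg _)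
    have hsecond : (fun s => evC (c s) 0 - evC (c 0) 0 - s • evC v 0)
        =o[nhds (0:ℝ)] (fun s : ℝ => s) := by
      have h := hasDerivAt_iff_isLittleO.1 hevc
      simpa using h
    have hkey : ∀ s : ℝ, (evC (c s) (-(S.d k (S.Lof (c s)))) - evC (c s) 0)
            + (evC (c s) 0 - evC (c 0) 0 - s • evC v 0)
        = S.hat (c s) k - S.hat (c 0) k - (s - 0) • evC v 0 := by
      intro s
      have h1 : S.hat (c s) k = evC (c s) (-(S.d k (S.Lof (c s)))) := rfl
      have h2 : S.hat (c 0) k = evC (c 0) 0 := by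
        show evC (c 0) (-(S.d k (S.Lof (c 0)))) = evC (c 0) 0
        rw [ht0, neg_zero]
      rw [h1, h2, sub_zero]
      abel
    rw [hasDerivAt_iff_isLittleO]
    exact (hfirst.add hsecond).congr' (Eventually.of_forall hkey)
      (Eventually.of_forall fun s => (sub_zero s).symm)
  have hhat0 : S.hat (c 0) = S.hat φ := by rw [hc0]
  have hgB' : HasFDerivAt S.g (fderiv ℝ S.g (S.hat φ)) (S.hat (c 0)) := by
    rw [hhat0]; exact hgB
  have hgh : HasDerivAt (fun s => S.g (S.hat (c s)))
      (fderiv ℝ S.g (S.hat φ) (fun _ => evC v 0)) 0 :=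
    hgB'.comp_hasDerivAt 0 hhat
  have heqf : (fun s => dvC (c s) 0) =ᶠ[nhds (0:ℝ)] (fun s => S.g (S.hat (c s))) :=
    Filter.eventually_of_mem hIoo fun s hs => (hcX s hs).2
  have hfinal : HasDerivAt (fun s => dvC (c s) 0)
      (fderiv ℝ S.g (S.hat φ) (fun _ => evC v 0)) 0 := hgh.congr_of_eventuallyEq heqf
  exact hdvc.unique hfinal

end MyClaims

section MyClaimD

open Filter Asymptotics

variable {r : ℝ} {n kk : ℕ} {F : Type*} [NormedAddCommGroup F] [NormedSpace ℝ F]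

lemma claimD (hr : 0 < r) (S : Setting r n kk F) {φ : C1 r (Fin n → ℝ)}
    (hφX : φ ∈ S.Xf) (hW : S.Lof φ ∈ S.W) (hV : S.hat φ ∈ S.V)
    (hd0 : ∀ k, S.d k (S.Lof φ) = 0)
    (ψ : Fin n → C1 r ℝ)
    (hψL : ∀ ν, S.L (singleC1 ν (ψ ν)).1.1 = 0)
    (hψ0 : ∀ ν, evC (ψ ν) 0 = 0)
    (hψ1 : ∀ ν, dvC (ψ ν) 0 = 1)
    {χ : C1 r (Fin n → ℝ)}
    (hχ : dvC χ 0 = fderiv ℝ S.g (S.hat φ) (fun _ => evC χ 0)) :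
    χ ∈ tangentSet S.Xf φ := by
  classical
  set w₀ := S.Lof φ with hw₀
  set wχ := S.Lof χ with hwχ
  set B := fderiv ℝ S.g (S.hat φ) with hB
  have hYdv : ∀ x : Fin n → ℝ, dvC (Ymap ψ x) 0 = x := by
    intro x
    rw [dvC_Ymap]
    funext μ
    rw [hψ1 μ, mul_one]
  have hgB : HasFDerivAt S.g B (S.hat φ) :=
    ((S.g_smooth.contDiffAt (S.Vopen.mem_nhds hV)).differentiableAt one_ne_zero).hasFDerivAt
  set t : Fin kk → ℝ → ℝ := fun k s => S.d k (w₀ + s • wχ) with htdef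
  set O₀ : Set ℝ := (fun s : ℝ => w₀ + s • wχ) ⁻¹' S.W with hO₀def
  have haff : ContDiff ℝ 1 (fun s : ℝ => w₀ + s • wχ) :=
    contDiff_const.add (contDiff_id.smul contDiff_const)
  have hO₀ : IsOpen O₀ := S.Wopen.preimage haff.continuous
  have h0O₀ : (0:ℝ) ∈ O₀ := by
    show w₀ + (0:ℝ) • wχ ∈ S.W
    simpa using hW
  have htC : ∀ k, ContDiffOn ℝ 1 (t k) O₀ :=
    fun k => (S.d_smooth k).comp haff.contDiffOn (fun s hs => hs)
  have htmem : ∀ k, ∀ s ∈ O₀, t k s ∈ Set.Icc (0:ℝ) r := fun k s hs => S.d_mem k _ hs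
  have ht00 : ∀ k, t k 0 = 0 := by
    intro k
    show S.d k (w₀ + (0:ℝ) • wχ) = 0
    rw [zero_smul, add_zero]
    exact hd0 k
  set O₁ : Set ℝ := O₀ ∩ ⋂ k, (O₀ ∩ (t k) ⁻¹' Set.Iio r) with hO₁def
  have hO₁ : IsOpen O₁ := hO₀.inter (isOpen_iInter_of_finite fun k =>
    (htC k).continuousOn.isOpen_inter_preimage hO₀ isOpen_Iio)
  have hO₁sub : O₁ ⊆ O₀ := Set.inter_subset_left
  have h0O₁ : (0:ℝ) ∈ O₁ := ⟨h0O₀, Set.mem_iInter.2 fun k => ⟨h0O₀, by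
    show t k 0 < r
    rw [ht00 k]; exact hr⟩⟩
  have htlt : ∀ k, ∀ s ∈ O₁, t k s < r := fun k s hs => (Set.mem_iInter.1 hs.2 k).2
  have htd0 : ∀ k, HasDerivAt (t k) 0 0 := by
    intro k
    have hdiff : DifferentiableAt ℝ (t k) 0 :=
      ((htC k).contDiffAt (hO₀.mem_nhds h0O₀)).differentiableAt one_ne_zero
    have hmin : IsLocalMin (t k) 0 := by
      filter_upwards [hO₀.mem_nhds h0O₀] with s hs
      rw [ht00 k]
      exact (htmem k s hs).1
    have hz := hmin.deriv_eq_zero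
    have h2 := hdiff.hasDerivAt
    rwa [hz] at h2
  have htev : ∀ k, ∀ᶠ s in nhds (0:ℝ), t k s ∈ Set.Icc (0:ℝ) r := fun k =>
    Filter.eventually_of_mem (hO₀.mem_nhds h0O₀) fun s hs => htmem k s hs
  have hsqφ : ∀ k, HasDerivAt (fun s => evC φ (-(t k s))) 0 0 := fun k =>
    hasDerivAt_evC_comp_zero (htev k) (ht00 k) (htd0 k)
  have hsqχ : ∀ k, HasDerivAt (fun s => evC χ (-(t k s))) 0 0 := fun k =>
    hasDerivAt_evC_comp_zero (htev k) (ht00 k) (htd0 k)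
  have hsqψ : ∀ k ν, HasDerivAt (fun s => evC (ψ ν) (-(t k s))) 0 0 := fun k ν =>
    hasDerivAt_evC_comp_zero (htev k) (ht00 k) (htd0 k)
  -- the implicit equation
  set Efun : ℝ × (Fin n → ℝ) → (Fin kk → Fin n → ℝ) := fun p k =>
    evC φ (-(t k p.1)) + p.1 • evC χ (-(t k p.1))
      + (fun μ => p.2 μ * evC (ψ μ) (-(t k p.1))) with hEdef
  set Φ : ℝ × (Fin n → ℝ) → (Fin n → ℝ) := fun p =>
    dvC φ 0 + p.1 • dvC χ 0 + p.2 - S.g (Efun p) with hΦdef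
  have hE00 : Efun (0, 0) = S.hat φ := by
    funext k
    show evC φ (-(t k 0)) + (0:ℝ) • evC χ (-(t k 0))
        + (fun μ => (0 : Fin n → ℝ) μ * evC (ψ μ) (-(t k 0))) = S.hat φ k
    have h1 : S.hat φ k = evC φ (-(S.d k (S.Lof φ))) := rfl
    have h2 : t k 0 = S.d k (S.Lof φ) := by
      show S.d k (w₀ + (0:ℝ) • wχ) = S.d k (S.Lof φ)
      rw [zero_smul, add_zero]
    rw [h1, ← h2]
    funext μ
    simp
  -- smoothness of Efun
  have hEφ : ∀ k, ContDiffOn ℝ 1 (fun s => evC φ (-(t k s))) O₁ := fun k =>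
    contDiffOn_evC_comp hr φ hO₁ ((htC k).mono hO₁sub)
      (fun s hs => htmem k s (hO₁sub hs)) (htlt k)
  have hEχ : ∀ k, ContDiffOn ℝ 1 (fun s => evC χ (-(t k s))) O₁ := fun k =>
    contDiffOn_evC_comp hr χ hO₁ ((htC k).mono hO₁sub)
      (fun s hs => htmem k s (hO₁sub hs)) (htlt k)
  have hEψ : ∀ k ν, ContDiffOn ℝ 1 (fun s => evC (ψ ν) (-(t k s))) O₁ := fun k ν =>
    contDiffOn_evC_comp hr (ψ ν) hO₁ ((htC k).mono hO₁sub)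
      (fun s hs => htmem k s (hO₁sub hs)) (htlt k)
  have hO₁u : IsOpen (O₁ ×ˢ (Set.univ : Set (Fin n → ℝ))) := hO₁.prod isOpen_univ
  have hEsm : ContDiffOn ℝ 1 Efun (O₁ ×ˢ (Set.univ : Set (Fin n → ℝ))) := by
    refine contDiffOn_pi.2 fun k => ?_
    refine ContDiffOn.add (ContDiffOn.add ?_ ?_) ?_
    · exact (hEφ k).comp contDiff_fst.contDiffOn (fun p hp => hp.1)
    · exact (contDiff_fst.contDiffOn).smul
        ((hEχ k).comp contDiff_fst.contDiffOn (fun p hp => hp.1))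
    · refine contDiffOn_pi.2 fun μ => ?_
      exact (((contDiff_pi.1 contDiff_snd) μ).contDiffOn).mul
        ((hEψ k μ).comp contDiff_fst.contDiffOn (fun p hp => hp.1))
  have hEat : ContDiffAt ℝ 1 Efun ((0:ℝ), (0 : Fin n → ℝ)) :=
    hEsm.contDiffAt (hO₁u.mem_nhds ⟨h0O₁, trivial⟩)
  have hgat : ContDiffAt ℝ 1 S.g (Efun (0, 0)) := by
    rw [hE00]
    exact S.g_smooth.contDiffAt (S.Vopen.mem_nhds hV)
  have hΦat : ContDiffAt ℝ 1 Φ ((0:ℝ), (0 : Fin n → ℝ)) := by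
    refine ContDiffAt.sub ?_ (hgat.comp _ hEat)
    exact (contDiffAt_const.add (contDiff_fst.contDiffAt.smul contDiffAt_const)).add
      contDiff_snd.contDiffAt
  -- derivative of Φ at (0,0)
  have hT1 : ∀ {G : Type} (_ : NormedAddCommGroup G) , True := fun _ => trivial
  have hcompfstφ : ∀ k, HasFDerivAt (fun p : ℝ × (Fin n → ℝ) => evC φ (-(t k p.1)))
      (0 : ℝ × (Fin n → ℝ) →L[ℝ] (Fin n → ℝ)) ((0:ℝ), (0 : Fin n → ℝ)) := by
    intro k
    have h := ((hsqφ k).hasFDerivAt).comp ((0:ℝ), (0 : Fin n → ℝ)) (hasFDerivAt_fst (𝕜 := ℝ) (E := ℝ) (F := Fin n → ℝ))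
    refine h.congr_fderiv ?_
    refine ContinuousLinearMap.ext fun p => ?_
    simp
  have hcompfstχ : ∀ k, HasFDerivAt (fun p : ℝ × (Fin n → ℝ) => evC χ (-(t k p.1)))
      (0 : ℝ × (Fin n → ℝ) →L[ℝ] (Fin n → ℝ)) ((0:ℝ), (0 : Fin n → ℝ)) := by
    intro k
    have h := ((hsqχ k).hasFDerivAt).comp ((0:ℝ), (0 : Fin n → ℝ)) (hasFDerivAt_fst (𝕜 := ℝ) (E := ℝ) (F := Fin n → ℝ))
    refine h.congr_fderiv ?_
    refine ContinuousLinearMap.ext fun p => ?_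
    simp
  have hcompfstψ : ∀ k ν, HasFDerivAt (fun p : ℝ × (Fin n → ℝ) => evC (ψ ν) (-(t k p.1)))
      (0 : ℝ × (Fin n → ℝ) →L[ℝ] ℝ) ((0:ℝ), (0 : Fin n → ℝ)) := by
    intro k ν
    have h := ((hsqψ k ν).hasFDerivAt).comp ((0:ℝ), (0 : Fin n → ℝ)) (hasFDerivAt_fst (𝕜 := ℝ) (E := ℝ) (F := Fin n → ℝ))
    refine h.congr_fderiv ?_
    refine ContinuousLinearMap.ext fun p => ?_
    simp
  have hT2 : ∀ k, HasFDerivAt (fun p : ℝ × (Fin n → ℝ) => p.1 • evC χ (-(t k p.1)))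
      ((ContinuousLinearMap.fst ℝ ℝ (Fin n → ℝ)).smulRight (evC χ 0))
      ((0:ℝ), (0 : Fin n → ℝ)) := by
    intro k
    have h := (hasFDerivAt_fst (p := ((0:ℝ), (0 : Fin n → ℝ)))).smul (hcompfstχ k)
    refine h.congr_fderiv ?_
    have : -(t k ((0:ℝ), (0 : Fin n → ℝ)).1) = (0:ℝ) := by
      show -(t k 0) = 0
      rw [ht00 k, neg_zero]
    rw [this]
    simp
  have hT3 : ∀ k, HasFDerivAt
      (fun p : ℝ × (Fin n → ℝ) => (fun μ => p.2 μ * evC (ψ μ) (-(t k p.1))))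
      (0 : ℝ × (Fin n → ℝ) →L[ℝ] (Fin n → ℝ)) ((0:ℝ), (0 : Fin n → ℝ)) := by
    intro k
    have hcomp : ∀ μ, HasFDerivAt (fun p : ℝ × (Fin n → ℝ) => p.2 μ * evC (ψ μ) (-(t k p.1)))
        (0 : ℝ × (Fin n → ℝ) →L[ℝ] ℝ) ((0:ℝ), (0 : Fin n → ℝ)) := by
      intro μ
      have hc : HasFDerivAt (fun p : ℝ × (Fin n → ℝ) => p.2 μ)
          ((ContinuousLinearMap.proj μ).comp (ContinuousLinearMap.snd ℝ ℝ (Fin n → ℝ)))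
          ((0:ℝ), (0 : Fin n → ℝ)) :=
        ((ContinuousLinearMap.proj μ).comp
          (ContinuousLinearMap.snd ℝ ℝ (Fin n → ℝ))).hasFDerivAt
      have h := hc.mul (hcompfstψ k μ)
      refine h.congr_fderiv ?_
      have h1 : evC (ψ μ) (-(t k ((0:ℝ), (0 : Fin n → ℝ)).1)) = 0 := by
        show evC (ψ μ) (-(t k 0)) = 0
        rw [ht00 k, neg_zero]
        exact hψ0 μ
      rw [h1]
      simp
    have h := hasFDerivAt_pi.2 hcomp
    refine h.congr_fderiv ?_
    ext <;> rfl
  have hEd : HasFDerivAt Efun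
      (ContinuousLinearMap.pi fun _ : Fin kk =>
        (ContinuousLinearMap.fst ℝ ℝ (Fin n → ℝ)).smulRight (evC χ 0))
      ((0:ℝ), (0 : Fin n → ℝ)) := by
    refine hasFDerivAt_pi.2 fun k => ?_
    have h := ((hcompfstφ k).add (hT2 k)).add (hT3 k)
    refine h.congr_fderiv ?_
    simp
  have hgEd : HasFDerivAt (fun p => S.g (Efun p))
      (B.comp (ContinuousLinearMap.pi fun _ : Fin kk =>
        (ContinuousLinearMap.fst ℝ ℝ (Fin n → ℝ)).smulRight (evC χ 0)))
      ((0:ℝ), (0 : Fin n → ℝ)) := by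
    have hgB' : HasFDerivAt S.g B (Efun (0, 0)) := by rw [hE00]; exact hgB
    exact hgB'.comp _ hEd
  have hΦd : HasFDerivAt Φ (ContinuousLinearMap.snd ℝ ℝ (Fin n → ℝ))
      ((0:ℝ), (0 : Fin n → ℝ)) := by
    have ha : HasFDerivAt (fun p : ℝ × (Fin n → ℝ) => p.1 • dvC χ 0)
        ((ContinuousLinearMap.fst ℝ ℝ (Fin n → ℝ)).smulRight (dvC χ 0))
        ((0:ℝ), (0 : Fin n → ℝ)) := by
      have hcst : HasFDerivAt (fun _ : ℝ × (Fin n → ℝ) => dvC χ 0)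
          (0 : (ℝ × (Fin n → ℝ)) →L[ℝ] (Fin n → ℝ)) ((0:ℝ), (0 : Fin n → ℝ)) :=
        hasFDerivAt_const (dvC χ 0) ((0:ℝ), (0 : Fin n → ℝ))
      have h := (hasFDerivAt_fst (p := ((0:ℝ), (0 : Fin n → ℝ)))).smul hcst
      refine h.congr_fderiv ?_
      simp
    have h1 := ((hasFDerivAt_const (dvC φ 0) ((0:ℝ), (0 : Fin n → ℝ))).add ha).add
      (hasFDerivAt_snd (p := ((0:ℝ), (0 : Fin n → ℝ))))
    have h2 := h1.sub hgEd
    refine h2.congr_fderiv ?_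
    refine ContinuousLinearMap.ext fun p => ?_
    have hDE : (ContinuousLinearMap.pi fun _ : Fin kk =>
        (ContinuousLinearMap.fst ℝ ℝ (Fin n → ℝ)).smulRight (evC χ 0)) p
        = fun _ : Fin kk => p.1 • evC χ 0 := by
      funext k
      simp
    have hBsm : B (fun _ : Fin kk => p.1 • evC χ 0) = p.1 • B (fun _ : Fin kk => evC χ 0) := by
      have : (fun _ : Fin kk => p.1 • evC χ 0) = p.1 • (fun _ : Fin kk => evC χ 0) := rfl
      rw [this, map_smul]
    simp only [ContinuousLinearMap.add_apply, ContinuousLinearMap.sub_apply,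
      ContinuousLinearMap.zero_apply, ContinuousLinearMap.comp_apply,
      ContinuousLinearMap.smulRight_apply, ContinuousLinearMap.coe_fst',
      ContinuousLinearMap.coe_snd', ContinuousLinearMap.coe_comp']
    rw [hDE, hBsm, ← hχ]
    abel
  -- the inverse function
  set G : ℝ × (Fin n → ℝ) → ℝ × (Fin n → ℝ) := fun p => (p.1, Φ p) with hGdef
  have hΦ00 : Φ ((0:ℝ), (0 : Fin n → ℝ)) = 0 := by
    show dvC φ 0 + (0:ℝ) • dvC χ 0 + (0 : Fin n → ℝ) - S.g (Efun (0, 0)) = 0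
    rw [hE00, zero_smul, add_zero, add_zero]
    have : dvC φ 0 = S.g (S.hat φ) := hφX.2
    rw [this, sub_self]
  have hG00 : G ((0:ℝ), (0 : Fin n → ℝ)) = ((0:ℝ), (0 : Fin n → ℝ)) := by
    show ((0:ℝ), Φ ((0:ℝ), (0 : Fin n → ℝ))) = ((0:ℝ), (0 : Fin n → ℝ))
    rw [hΦ00]
  have hGat : ContDiffAt ℝ 1 G ((0:ℝ), (0 : Fin n → ℝ)) := contDiffAt_fst.prodMk hΦat
  set eqv := ContinuousLinearEquiv.refl ℝ (ℝ × (Fin n → ℝ)) with heqv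
  have hGd : HasFDerivAt G (eqv : (ℝ × (Fin n → ℝ)) →L[ℝ] (ℝ × (Fin n → ℝ)))
      ((0:ℝ), (0 : Fin n → ℝ)) := by
    have h := (hasFDerivAt_fst (p := ((0:ℝ), (0 : Fin n → ℝ)))).prodMk hΦd
    refine h.congr_fderiv ?_
    rw [ContinuousLinearMap.fst_prod_snd, heqv, ContinuousLinearEquiv.coe_refl]
  have hstr : HasStrictFDerivAt G (eqv : (ℝ × (Fin n → ℝ)) →L[ℝ] (ℝ × (Fin n → ℝ)))
      ((0:ℝ), (0 : Fin n → ℝ)) := hGat.hasStrictFDerivAt' hGd one_ne_zero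
  set iv := hstr.localInverse G eqv ((0:ℝ), (0 : Fin n → ℝ)) with hivdef
  have hivCD : ContDiffAt ℝ 1 iv ((0:ℝ), (0 : Fin n → ℝ)) := by
    have h := hGat.to_localInverse (f' := eqv) hGd one_ne_zero
    rw [hG00] at h
    exact h
  have hleft0 : iv ((0:ℝ), (0 : Fin n → ℝ)) = ((0:ℝ), (0 : Fin n → ℝ)) := by
    have h := hstr.localInverse_apply_image
    rw [hG00] at h
    exact h
  have hright : ∀ᶠ p in nhds ((0:ℝ), (0 : Fin n → ℝ)), G (iv p) = p := by
    have h := hstr.eventually_right_inverse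
    rwa [hG00] at h
  have hivd : HasFDerivAt iv (eqv.symm : (ℝ × (Fin n → ℝ)) →L[ℝ] (ℝ × (Fin n → ℝ)))
      ((0:ℝ), (0 : Fin n → ℝ)) := by
    have h := hstr.to_localInverse.hasFDerivAt
    rwa [hG00] at h
  set u : ℝ → Fin n → ℝ := fun s => (iv (s, 0)).2 with hudef
  have hu0 : u 0 = 0 := by
    show (iv ((0:ℝ), (0 : Fin n → ℝ))).2 = 0
    rw [hleft0]
  have hι : ContinuousAt (fun s : ℝ => (s, (0 : Fin n → ℝ))) 0 :=
    (continuous_id.prodMk continuous_const).continuousAt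
  have hev1 : ∀ᶠ s in nhds (0:ℝ), G (iv (s, 0)) = (s, 0) := hι.tendsto.eventually hright
  have hivs : ∀ᶠ s in nhds (0:ℝ), iv (s, 0) = (s, u s) := by
    filter_upwards [hev1] with s hs
    have h1 : (iv (s, 0)).1 = s := congrArg Prod.fst hs
    exact Prod.ext h1 rfl
  have hΦu : ∀ᶠ s in nhds (0:ℝ), Φ (s, u s) = 0 := by
    filter_upwards [hev1, hivs] with s h1 h2
    have h3 : Φ (iv (s, 0)) = (0 : Fin n → ℝ) := congrArg Prod.snd h1
    rwa [h2] at h3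
  have huCD : ContDiffAt ℝ 1 u 0 := by
    have hin : ContDiffAt ℝ 1 (fun s : ℝ => ((s, (0 : Fin n → ℝ)) : ℝ × (Fin n → ℝ))) 0 :=
      (contDiff_id.prodMk contDiff_const).contDiffAt
    have h2 : ContDiffAt ℝ 1 (fun s : ℝ => iv (s, 0)) 0 :=
      ContDiffAt.comp 0 hivCD hin
    exact ContDiffAt.comp 0 contDiff_snd.contDiffAt h2
  have hud : HasDerivAt u 0 0 := by
    have hιd : HasDerivAt (fun s : ℝ => (s, (0 : Fin n → ℝ))) ((1:ℝ), (0 : Fin n → ℝ)) 0 :=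
      (hasDerivAt_id 0).prodMk (hasDerivAt_const 0 0)
    have h2 := hivd.comp_hasDerivAt 0 hιd
    have h3 := (ContinuousLinearMap.snd ℝ ℝ (Fin n → ℝ)).hasFDerivAt.comp_hasDerivAt 0 h2
    refine h3.congr_deriv ?_
    rfl
  obtain ⟨O₂, hO₂, huO₂⟩ := huCD.contDiffOn le_rfl (by simp)
  have hEU : ContinuousAt (fun s : ℝ => Efun (s, u s)) 0 := by
    have h1 : ContinuousAt (fun s : ℝ => ((s, u s) : ℝ × (Fin n → ℝ))) 0 :=
      continuous_id.continuousAt.prodMk huCD.continuousAt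
    have h2 : ContinuousAt Efun ((0:ℝ), u 0) := by
      rw [hu0]; exact hEat.continuousAt
    exact ContinuousAt.comp (f := fun s : ℝ => ((s, u s) : ℝ × (Fin n → ℝ))) h2 h1
  have hVev : ∀ᶠ s in nhds (0:ℝ), Efun (s, u s) ∈ S.V := by
    have h0 : Efun ((0:ℝ), u 0) = S.hat φ := by rw [hu0]; exact hE00
    refine hEU.eventually_mem ?_
    show S.V ∈ nhds (Efun ((0:ℝ), u 0))
    rw [h0]
    exact S.Vopen.mem_nhds hV
  have hbig : ∀ᶠ s in nhds (0:ℝ),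
      s ∈ O₁ ∧ Φ (s, u s) = 0 ∧ Efun (s, u s) ∈ S.V ∧ s ∈ O₂ := by
    filter_upwards [hO₁.mem_nhds h0O₁, hΦu, hVev, hO₂] with s h1 h2 h3 h4
    exact ⟨h1, h2, h3, h4⟩
  obtain ⟨ε, hε, hball⟩ := Metric.eventually_nhds_iff_ball.1 hbig
  have hIb : ∀ s ∈ Set.Ioo (-ε) ε,
      s ∈ O₁ ∧ Φ (s, u s) = 0 ∧ Efun (s, u s) ∈ S.V ∧ s ∈ O₂ := by
    intro s hs
    refine hball s ?_
    rw [Real.ball_eq_Ioo]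
    constructor <;> [linarith [hs.1]; linarith [hs.2]]
  refine ⟨fun s => φ + s • χ + Ymap ψ (u s), ε, hε, ?_, ?_, ?_, ?_⟩
  · -- smoothness of the curve
    have h1 : ContDiffOn ℝ 1 (fun s : ℝ => φ + s • χ) (Set.Ioo (-ε) ε) :=
      (contDiff_const.add (contDiff_id.smul contDiff_const)).contDiffOn
    have husub : ContDiffOn ℝ 1 u (Set.Ioo (-ε) ε) :=
      huO₂.mono (fun s hs => (hIb s hs).2.2.2)
    have h2 : ContDiffOn ℝ 1 (fun s => Ymap ψ (u s)) (Set.Ioo (-ε) ε) := by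
      have heq : (fun s => Ymap ψ (u s))
          = fun s => ∑ ν, u s ν • singleC1 ν (ψ ν) := rfl
      rw [heq]
      refine ContDiffOn.sum fun ν _ => ?_
      refine ContDiffOn.smul (F := C1 r (Fin n → ℝ)) (f := fun s => u s ν)
          (g := fun _ => singleC1 ν (ψ ν)) ?_ contDiffOn_const
      exact (ContinuousLinearMap.proj ν :
        (Fin n → ℝ) →L[ℝ] ℝ).contDiff.comp_contDiffOn husub
    exact h1.add h2
  · -- membership in X_f
    intro s hs
    obtain ⟨hsO₁, hsΦ, hsV, _⟩ := hIb s hs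
    have hLcs : S.Lof (φ + s • χ + Ymap ψ (u s)) = w₀ + s • wχ := by
      rw [Lof_add, Lof_add, Lof_smul, Lof_Ymap S ψ hψL, add_zero]
    have hUW : S.Lof (φ + s • χ + Ymap ψ (u s)) ∈ S.W := by
      rw [hLcs]
      exact hO₁sub hsO₁
    have hhatc : S.hat (φ + s • χ + Ymap ψ (u s)) = Efun (s, u s) := by
      funext k
      show evC (φ + s • χ + Ymap ψ (u s))
        (-(S.d k (S.Lof (φ + s • χ + Ymap ψ (u s))))) = Efun (s, u s) k
      rw [hLcs]
      show evC (φ + s • χ + Ymap ψ (u s)) (-(t k s)) = Efun (s, u s) k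
      rw [evC_add, evC_add, evC_smul, evC_Ymap]
    have hdvcs : dvC (φ + s • χ + Ymap ψ (u s)) 0 = dvC φ 0 + s • dvC χ 0 + u s := by
      rw [dvC_add, dvC_add, dvC_smul, hYdv (u s)]
    refine ⟨⟨hUW, ?_⟩, ?_⟩
    · rw [hhatc]
      exact hsV
    · show dvC (φ + s • χ + Ymap ψ (u s)) 0 = S.g (S.hat (φ + s • χ + Ymap ψ (u s)))
      rw [hdvcs, hhatc]
      have hsΦ' : dvC φ 0 + s • dvC χ 0 + u s - S.g (Efun (s, u s)) = 0 := hsΦ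
      exact sub_eq_zero.1 hsΦ'
  · -- value at 0
    show φ + (0:ℝ) • χ + Ymap ψ (u 0) = φ
    rw [hu0, map_zero, zero_smul, add_zero, add_zero]
  · -- derivative at 0
    have h1 : HasDerivAt (fun s : ℝ => φ + s • χ) χ 0 := by
      have h := ((hasDerivAt_id (0:ℝ)).smul_const χ).const_add φ
      simpa using h
    have h2 : HasDerivAt (fun s => Ymap ψ (u s)) 0 0 := by
      have hcomp : ∀ ν : Fin n,
          HasDerivAt (fun s => u s ν • singleC1 ν (ψ ν)) (0 : C1 r (Fin n → ℝ)) 0 := by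
        intro ν
        have hν : HasDerivAt (fun s => u s ν) 0 0 := by
          have h := hasDerivAt_pi.1 hud ν
          simpa using h
        have h := hν.smul_const (singleC1 ν (ψ ν))
        simpa using h
      have hsum := HasDerivAt.fun_sum (𝕜 := ℝ) (F := C1 r (Fin n → ℝ)) (fun ν (_ : ν ∈ Finset.univ) => hcomp ν)
      have hzz : (∑ _ν : Fin n, (0 : C1 r (Fin n → ℝ))) = 0 := Finset.sum_const_zero
      rw [hzz] at hsum
      have heq : (fun s => Ymap ψ (u s))
          = fun s => ∑ ν, u s ν • singleC1 ν (ψ ν) := rfl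
      rw [heq]
      exact hsum
    have h := HasDerivAt.add (𝕜 := ℝ) (F := C1 r (Fin n → ℝ)) h1 h2
    rw [add_zero] at h
    exact h.hasDerivWithinAt

end MyClaimD

variable {r : ℝ} {n kk : ℕ} {F : Type*} [NormedAddCommGroup F] [NormedSpace ℝ F]
  [FiniteDimensional ℝ F]

/-- Proposition 3.2: `R^K` is injective on `X_{fK}` and defines a (topological) isomorphism
from each tangent space `T_φX_f`, `φ ∈ X_{fK}`, onto `X₀`. -/
theorem statement4 (hr : 0 < r) (S : Setting r n kk F)
    (hUK : (S.UJ (Finset.univ : Finset (Fin kk))).Nonempty)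
    (z : ℝ) (hz : z ∈ Set.Ioo (-r) 0) (ψ : Fin n → C1 r ℝ)
    (hψL : ∀ ν, S.L (singleC1 ν (ψ ν)).1.1 = 0)
    (hψ0 : ∀ ν, evC (ψ ν) 0 = 0)
    (hψ1 : ∀ ν, dvC (ψ ν) 0 = 1)
    (hψz : ∀ ν, ∀ t ∈ Set.Icc (-r) z, evC (ψ ν) t = 0) :
    Set.InjOn (RKmap ψ) (S.XfJ (Finset.univ : Finset (Fin kk))) ∧
    ∀ φ ∈ S.XfJ (Finset.univ : Finset (Fin kk)),
      Set.BijOn (RKmap ψ) (tangentSet S.Xf φ) (X0sub r n : Set (C1 r (Fin n → ℝ))) ∧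
      ∃ σ : C1 r (Fin n → ℝ) → C1 r (Fin n → ℝ),
        ContinuousOn σ (X0sub r n : Set (C1 r (Fin n → ℝ))) ∧
        Set.InvOn σ (RKmap ψ) (tangentSet S.Xf φ) (X0sub r n : Set (C1 r (Fin n → ℝ))) := by
  classical
  have hYdv : ∀ x : Fin n → ℝ, dvC (Ymap ψ x) 0 = x := by
    intro x; rw [dvC_Ymap]; funext μ; rw [hψ1 μ, mul_one]
  have hYev : ∀ x : Fin n → ℝ, evC (Ymap ψ x) 0 = 0 := by
    intro x; rw [evC_Ymap]; funext μ; rw [hψ0 μ, mul_zero]; rfl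
  have hYL : ∀ x, S.Lof (Ymap ψ x) = 0 := Lof_Ymap S ψ hψL
  have hRdv : ∀ q : C1 r (Fin n → ℝ), dvC (RKmap ψ q) 0 = 0 := by
    intro q
    show dvC (q - Ymap ψ (dvC q 0)) 0 = 0
    rw [dvC_sub, hYdv, sub_self]
  have hRev : ∀ q : C1 r (Fin n → ℝ), evC (RKmap ψ q) 0 = evC q 0 := by
    intro q
    show evC (q - Ymap ψ (dvC q 0)) 0 = evC q 0
    rw [evC_sub, hYev, sub_zero]
  have hRL : ∀ q : C1 r (Fin n → ℝ), S.Lof (RKmap ψ q) = S.Lof q := by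
    intro q
    show S.Lof (q - Ymap ψ (dvC q 0)) = S.Lof q
    rw [Lof_sub, hYL, sub_zero]
  have hX0 : ∀ w : C1 r (Fin n → ℝ),
      w ∈ (X0sub r n : Set (C1 r (Fin n → ℝ))) ↔ dvC w 0 = 0 := fun w => Iff.rfl
  constructor
  · -- injectivity on X_{fK}
    intro p hp q hq heq
    obtain ⟨hpX, hpU⟩ := hp
    obtain ⟨hqX, hqU⟩ := hq
    have hdp : ∀ k, S.d k (S.Lof p) = 0 := fun k => hpU.2.2.1 k (Finset.mem_univ k)
    have hdq : ∀ k, S.d k (S.Lof q) = 0 := fun k => hqU.2.2.1 k (Finset.mem_univ k)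
    have hev : evC p 0 = evC q 0 := by
      have h1 := hRev p
      have h2 := hRev q
      rw [heq] at h1
      exact h1.symm.trans h2
    have hhat : S.hat p = S.hat q := by
      funext k
      show evC p (-(S.d k (S.Lof p))) = evC q (-(S.d k (S.Lof q)))
      rw [hdp k, hdq k, neg_zero, hev]
    have hdv : dvC p 0 = dvC q 0 := by
      rw [hpX.2, hqX.2]
      show S.g (S.hat p) = S.g (S.hat q)
      rw [hhat]
    have heq2 : p - Ymap ψ (dvC p 0) = q - Ymap ψ (dvC q 0) := heq
    rw [hdv] at heq2
    exact sub_left_inj.1 heq2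
  · intro φ hφ
    obtain ⟨hφX, hφU⟩ := hφ
    have hW : S.Lof φ ∈ S.W := hφU.2.1
    have hV : S.hat φ ∈ S.V := hφX.1.2
    have hd0 : ∀ k, S.d k (S.Lof φ) = 0 := fun k => hφU.2.2.1 k (Finset.mem_univ k)
    set B := fderiv ℝ S.g (S.hat φ) with hB
    set A : (Fin n → ℝ) → (Fin n → ℝ) := fun x => B (fun _ => x) with hA
    set σ : C1 r (Fin n → ℝ) → C1 r (Fin n → ℝ) :=
      fun η => η + Ymap ψ (A (evC η 0)) with hσ
    have hC : ∀ v ∈ tangentSet S.Xf φ, dvC v 0 = A (evC v 0) := fun v hv =>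
      claimC hr S hW hV hd0 hv
    have hD : ∀ χ : C1 r (Fin n → ℝ), dvC χ 0 = A (evC χ 0) → χ ∈ tangentSet S.Xf φ :=
      fun χ hχ => claimD hr S hφX hW hV hd0 ψ hψL hψ0 hψ1 hχ
    have hσdv : ∀ η, dvC (σ η) 0 = dvC η 0 + A (evC η 0) := by
      intro η
      show dvC (η + Ymap ψ (A (evC η 0))) 0 = _
      rw [dvC_add, hYdv]
    have hσev : ∀ η, evC (σ η) 0 = evC η 0 := by
      intro η
      show evC (η + Ymap ψ (A (evC η 0))) 0 = _
      rw [evC_add, hYev, add_zero]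
    have hlinv : ∀ v ∈ tangentSet S.Xf φ, σ (RKmap ψ v) = v := by
      intro v hv
      show RKmap ψ v + Ymap ψ (A (evC (RKmap ψ v) 0)) = v
      rw [hRev v, ← hC v hv]
      show v - Ymap ψ (dvC v 0) + Ymap ψ (dvC v 0) = v
      abel
    have hrinv : ∀ η : C1 r (Fin n → ℝ), dvC η 0 = 0 → RKmap ψ (σ η) = η := by
      intro η hη
      show σ η - Ymap ψ (dvC (σ η) 0) = η
      rw [hσdv η, hη, zero_add]
      show η + Ymap ψ (A (evC η 0)) - Ymap ψ (A (evC η 0)) = η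
      abel
    have hσtan : ∀ η : C1 r (Fin n → ℝ), dvC η 0 = 0 → σ η ∈ tangentSet S.Xf φ := by
      intro η hη
      refine hD (σ η) ?_
      rw [hσdv η, hη, zero_add, hσev η]
    refine ⟨⟨?_, ?_, ?_⟩, σ, ?_, ?_, ?_⟩
    · intro v _
      exact (hX0 _).2 (hRdv v)
    · intro a ha b hb h
      rw [← hlinv a ha, ← hlinv b hb, h]
    · intro η hη
      exact ⟨σ η, hσtan η ((hX0 η).1 hη), hrinv η ((hX0 η).1 hη)⟩
    · have hev : Continuous (fun η : C1 r (Fin n → ℝ) => evC η 0) := by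
        refine LipschitzWith.continuous (K := 1) ?_
        refine LipschitzWith.of_dist_le_mul fun a b => ?_
        rw [dist_eq_norm, dist_eq_norm]
        have h : evC a 0 - evC b 0 = evC (a - b) 0 := (evC_sub a b 0).symm
        rw [h]
        rw [NNReal.coe_one, one_mul]
        exact norm_evC_le _ _
      have hAc : Continuous A := B.continuous.comp (continuous_pi fun _ => continuous_id)
      have hYc : Continuous (Ymap ψ) := by
        have h : (fun x : Fin n → ℝ => Ymap ψ x)
            = fun x => ∑ ν, x ν • singleC1 ν (ψ ν) := rfl
        show Continuous fun x : Fin n → ℝ => Ymap ψ x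
        rw [h]
        exact continuous_finset_sum _ fun ν _ => (continuous_apply ν).smul continuous_const
      have hσc : Continuous σ := continuous_id.add (hYc.comp (hAc.comp hev))
      exact hσc.continuousOn
    · exact fun v hv => hlinv v hv
    · exact fun η hη => hrinv η ((hX0 η).1 hη)
end
end

section
/- Let a finite-dimensional real vector space ℱ, a continuous linear map λ:C→ℝ^q, a non-empty open subset 𝒲⊂ℱ, and a continuous function d:𝒲→(0,r] be given. Then there exists a continuously differentiable map y:𝒲→C^1 such that for every w∈𝒲: y(w)(0)=0, (y(w))'(0)=1, λ(y(w))=0, and y(w)(t)=0 for all t with −r ≤ t ≤ −d(w). -/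
set_option linter.unusedSectionVars false

open Set

noncomputable section

namespace Stmt9
open Filter Topology

/-- basic bump profile -/
def Hr (ε : ℝ) (t : ℝ) : ℝ := t * Real.smoothTransition (1 + t / ε)

lemma contDiff_trans (ε : ℝ) : ContDiff ℝ 1 (fun x : ℝ => Real.smoothTransition (1 + x / ε)) := by
  have h2 : ContDiff ℝ 1 (fun x : ℝ => 1 + x / ε) := contDiff_const.add (contDiff_id.div_const ε)
  have h3 : ContDiff ℝ 1 Real.smoothTransition := by
    exact_mod_cast Real.smoothTransition.contDiff (n := 1)
  exact h3.comp h2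

lemma contDiff_Hr (ε : ℝ) : ContDiff ℝ 1 (Hr ε) := contDiff_id.mul (contDiff_trans ε)

lemma Hr_zero (ε : ℝ) : Hr ε 0 = 0 := by simp [Hr]

lemma Hr_eq_zero {ε t : ℝ} (hε : 0 < ε) (ht : t ≤ -ε) : Hr ε t = 0 := by
  have h1 : t / ε ≤ -1 := by
    rw [div_le_iff₀ hε]; linarith
  have : 1 + t / ε ≤ 0 := by linarith
  simp [Hr, Real.smoothTransition.zero_of_nonpos this]

lemma hasDerivAt_Hr (ε t : ℝ) : HasDerivAt (Hr ε) (deriv (Hr ε) t) t :=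
  (((contDiff_Hr ε).differentiable one_ne_zero) t).hasDerivAt

lemma deriv_Hr_zero (ε : ℝ) : deriv (Hr ε) 0 = 1 := by
  have hgd : DifferentiableAt ℝ (fun t : ℝ => Real.smoothTransition (1 + t / ε)) 0 :=
    ((contDiff_trans ε).differentiable one_ne_zero) 0
  have h : HasDerivAt (Hr ε)
      (1 * Real.smoothTransition (1 + 0 / ε) +
        0 * deriv (fun t : ℝ => Real.smoothTransition (1 + t / ε)) 0) 0 :=
    (hasDerivAt_id 0).mul hgd.hasDerivAt
  have := h.deriv
  simpa [Real.smoothTransition.one] using this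

lemma abs_Hr_le {ε t : ℝ} (hε : 0 < ε) (ht : t ≤ 0) : |Hr ε t| ≤ ε := by
  rcases le_or_gt t (-ε) with h | h
  · rw [Hr_eq_zero hε h]; simpa using hε.le
  · have h1 : |t| ≤ ε := abs_le.2 ⟨by linarith, by linarith⟩
    have h2 : |Real.smoothTransition (1 + t / ε)| ≤ 1 :=
      abs_le.2 ⟨by linarith [Real.smoothTransition.nonneg (1 + t/ε)],
        Real.smoothTransition.le_one _⟩
    calc |Hr ε t| = |t| * |Real.smoothTransition (1 + t / ε)| := abs_mul _ _
    _ ≤ ε * 1 := mul_le_mul h1 h2 (abs_nonneg _) hε.le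
    _ = ε := mul_one ε

variable {r : ℝ}

lemma extFun_eq {E : Type*} [NormedAddCommGroup E] [NormedSpace ℝ E]
    (φ : C(Icc0 r, E)) {t : ℝ} (ht : t ∈ Icc0 r) : extFun φ t = φ ⟨t, ht⟩ := dif_pos ht

/-- The bump `Hr ε` as a pair of continuous maps. -/
def hfunPair (r ε : ℝ) : C(Icc0 r, ℝ) × C(Icc0 r, ℝ) :=
  (⟨fun t => Hr ε t.1, (contDiff_Hr ε).continuous.comp continuous_subtype_val⟩,
    ⟨fun t => deriv (Hr ε) t.1,
      ((contDiff_Hr ε).continuous_deriv le_rfl).comp continuous_subtype_val⟩)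

lemma hfunPair_mem (r ε : ℝ) : hfunPair r ε ∈ C1sub r ℝ := by
  intro t ht
  have h1 : HasDerivWithinAt (Hr ε) (deriv (Hr ε) t) (Icc0 r) t :=
    (hasDerivAt_Hr ε t).hasDerivWithinAt
  rw [extFun_eq _ ht]
  show HasDerivWithinAt _ (deriv (Hr ε) t) _ _
  exact h1.congr (fun y hy => extFun_eq _ hy) (extFun_eq _ ht)

/-- The bump `Hr ε` as an element of `C¹([-r,0],ℝ)`. -/
def hfun (r ε : ℝ) : C1 r ℝ := ⟨hfunPair r ε, hfunPair_mem r ε⟩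

lemma evC_hfun {ε t : ℝ} (ht : t ∈ Icc0 r) : evC (hfun r ε) t = Hr ε t := extFun_eq _ ht

lemma dvC_hfun_zero (hr : 0 < r) (ε : ℝ) : dvC (hfun r ε) 0 = 1 := by
  have h0 : (0:ℝ) ∈ Icc0 r := ⟨by linarith, le_refl 0⟩
  have : dvC (hfun r ε) 0 = deriv (Hr ε) 0 := extFun_eq _ h0
  rw [this, deriv_Hr_zero]

lemma norm_hfun_fst_le (hr : 0 < r) {ε : ℝ} (hε : 0 < ε) : ‖(hfun r ε).1.1‖ ≤ ε := by
  refine (ContinuousMap.norm_le _ hε.le).2 fun t => ?_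
  have : |Hr ε t.1| ≤ ε := abs_Hr_le hε t.2.2
  simpa [hfun, hfunPair, Real.norm_eq_abs] using this

end Stmt9

namespace Stmt9
open Filter Topology

variable {r : ℝ} {q : ℕ}

/-- Evaluation at `t` as a linear map. -/
def evL (r : ℝ) (t : ℝ) : C1 r ℝ →ₗ[ℝ] ℝ where
  toFun φ := evC φ t
  map_add' φ ψ := by
    show extFun (φ.1.1 + ψ.1.1) t = extFun φ.1.1 t + extFun ψ.1.1 t
    rw [extFun_add]; rfl
  map_smul' c φ := by
    show extFun (c • φ.1.1) t = c • extFun φ.1.1 t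
    rw [extFun_smul]; rfl

/-- Evaluation of the derivative at `t` as a linear map. -/
def dvL (r : ℝ) (t : ℝ) : C1 r ℝ →ₗ[ℝ] ℝ where
  toFun φ := dvC φ t
  map_add' φ ψ := by
    show extFun (φ.1.2 + ψ.1.2) t = extFun φ.1.2 t + extFun ψ.1.2 t
    rw [extFun_add]; rfl
  map_smul' c φ := by
    show extFun (c • φ.1.2) t = c • extFun φ.1.2 t
    rw [extFun_smul]; rfl

/-- `lam` composed with the `C⁰`-part, as a linear map. -/
def lamL (r : ℝ) (q : ℕ) (lam : C(Icc0 r, ℝ) →L[ℝ] (Fin q → ℝ)) :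
    C1 r ℝ →ₗ[ℝ] (Fin q → ℝ) where
  toFun φ := lam φ.1.1
  map_add' φ ψ := by
    show lam (φ.1.1 + ψ.1.1) = _
    rw [map_add]
  map_smul' c φ := by
    show lam (c • φ.1.1) = _
    rw [map_smul]; rfl

/-- The subspace of `C¹` functions vanishing at `0` and on `[-r,-δ]`. -/
def Msub (r δ : ℝ) : Submodule ℝ (C1 r ℝ) where
  carrier := {φ | evC φ 0 = 0 ∧ ∀ t ∈ Set.Icc (-r) (-δ), evC φ t = 0}
  add_mem' := by
    intro φ ψ hφ hψ
    refine ⟨?_, fun t ht => ?_⟩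
    · show evL r 0 (φ + ψ) = 0
      rw [map_add]; show evC φ 0 + evC ψ 0 = 0; rw [hφ.1, hψ.1, add_zero]
    · show evL r t (φ + ψ) = 0
      rw [map_add]; show evC φ t + evC ψ t = 0; rw [hφ.2 t ht, hψ.2 t ht, add_zero]
  zero_mem' := by
    constructor
    · show extFun (0 : C(Icc0 r, ℝ)) 0 = 0; rw [extFun_zero]; rfl
    · intro t _; show extFun (0 : C(Icc0 r, ℝ)) t = 0; rw [extFun_zero]; rfl
  smul_mem' := by
    intro c φ hφ
    refine ⟨?_, fun t ht => ?_⟩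
    · show evL r 0 (c • φ) = 0
      rw [map_smul]; show c • evC φ 0 = 0; rw [hφ.1, smul_zero]
    · show evL r t (c • φ) = 0
      rw [map_smul]; show c • evC φ t = 0; rw [hφ.2 t ht, smul_zero]

/-- The combined linear map `φ ↦ (λφ, φ'(0))`. -/
def LamT (r : ℝ) (q : ℕ) (lam : C(Icc0 r, ℝ) →L[ℝ] (Fin q → ℝ)) :
    C1 r ℝ →ₗ[ℝ] ((Fin q → ℝ) × ℝ) :=
  (lamL r q lam).prod (dvL r 0)

lemma hfun_mem_Msub (hr : 0 < r) {δ ε : ℝ} (hδ : 0 < δ) (hδr : δ ≤ r) (hε : 0 < ε)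
    (hεδ : ε ≤ δ) : hfun r ε ∈ Msub r δ := by
  constructor
  · have h0 : (0:ℝ) ∈ Icc0 r := ⟨by linarith, le_refl 0⟩
    rw [evC_hfun h0, Hr_zero]
  · intro t ht
    have htI : t ∈ Icc0 r := ⟨ht.1, by linarith [ht.2]⟩
    rw [evC_hfun htI]
    exact Hr_eq_zero hε (by linarith [ht.2])

/-- Key existence: a `C¹` function with value `0`, derivative `1` at `0`, killed by `lam`,
vanishing on `[-r,-δ]`. -/
lemma exists_z (hr : 0 < r) (lam : C(Icc0 r, ℝ) →L[ℝ] (Fin q → ℝ))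
    {δ : ℝ} (hδ : 0 < δ) (hδr : δ ≤ r) :
    ∃ z : C1 r ℝ, evC z 0 = 0 ∧ dvC z 0 = 1 ∧ lam z.1.1 = 0 ∧
      ∀ t ∈ Set.Icc (-r) (-δ), evC z t = 0 := by
  set S := (Msub r δ).map (LamT r q lam) with hSdef
  haveI hfd : FiniteDimensional ℝ S := FiniteDimensional.finiteDimensional_submodule S
  have hS : IsClosed (S : Set ((Fin q → ℝ) × ℝ)) := Submodule.closed_of_finiteDimensional (𝕜 := ℝ) S
  have hεpos : ∀ k : ℕ, (0:ℝ) < δ / 2 ^ (k + 1) := fun k => by positivity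
  have hεle : ∀ k : ℕ, δ / 2 ^ (k + 1) ≤ δ := fun k => by
    rw [div_le_iff₀ (by positivity)]
    have h1 : (1:ℝ) ≤ 2 ^ (k+1) := one_le_pow₀ (by norm_num)
    nlinarith
  have hmem : ∀ k : ℕ, LamT r q lam (hfun r (δ / 2 ^ (k + 1))) ∈ S := fun k =>
    Submodule.mem_map_of_mem (hfun_mem_Msub hr hδ hδr (hεpos k) (hεle k))
  have htend : Tendsto (fun k : ℕ => LamT r q lam (hfun r (δ / 2 ^ (k + 1)))) atTop
      (𝓝 ((0 : Fin q → ℝ), (1:ℝ))) := by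
    have h2 : Tendsto (fun k : ℕ => lam (hfun r (δ / 2 ^ (k + 1))).1.1) atTop
        (𝓝 (0 : Fin q → ℝ)) := by
      apply squeeze_zero_norm (a := fun k : ℕ => (‖lam‖ * δ / 2) * (2⁻¹ : ℝ) ^ k)
      · intro k
        calc ‖lam (hfun r (δ / 2 ^ (k + 1))).1.1‖
            ≤ ‖lam‖ * ‖(hfun r (δ / 2 ^ (k + 1))).1.1‖ := lam.le_opNorm _
          _ ≤ ‖lam‖ * (δ / 2 ^ (k + 1)) := by
              exact mul_le_mul_of_nonneg_left (norm_hfun_fst_le hr (hεpos k)) (norm_nonneg lam)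
          _ = (‖lam‖ * δ / 2) * (2⁻¹ : ℝ) ^ k := by
              rw [pow_succ, inv_pow]; ring
      · have := tendsto_pow_atTop_nhds_zero_of_lt_one (by norm_num : (0:ℝ) ≤ 2⁻¹)
          (by norm_num : (2⁻¹:ℝ) < 1)
        simpa using this.const_mul (‖lam‖ * δ / 2)
    have h3 : Tendsto (fun _ : ℕ => (1:ℝ)) atTop (𝓝 (1:ℝ)) := tendsto_const_nhds
    have := h2.prodMk_nhds h3
    refine this.congr fun k => ?_
    show (lam _, 1) = (lam _, dvC (hfun r (δ / 2 ^ (k + 1))) 0)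
    rw [dvC_hfun_zero hr]
  have hmem01 : ((0 : Fin q → ℝ), (1:ℝ)) ∈ S :=
    hS.mem_of_tendsto htend (Filter.Eventually.of_forall hmem)
  obtain ⟨z, hzM, hz⟩ := hmem01
  have hz1 : lam z.1.1 = 0 := congrArg Prod.fst hz
  have hz2 : dvC z 0 = 1 := congrArg Prod.snd hz
  exact ⟨z, hzM.1, hz2, hz1, hzM.2⟩

end Stmt9

namespace Stmt9
open Filter Topology

variable {r : ℝ} {q : ℕ}

/-- dyadic partition of unity on `(0,r]` -/
def chi (r : ℝ) (k : ℕ) (ε : ℝ) : ℝ :=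
  Real.smoothTransition (2 ^ (k+1) * ε / r - 1) - Real.smoothTransition (2 ^ k * ε / r - 1)

lemma contDiff_chi (r : ℝ) (k : ℕ) : ContDiff ℝ 1 (chi r k) := by
  have h : ∀ c : ℝ, ContDiff ℝ 1 (fun ε : ℝ => Real.smoothTransition (c * ε / r - 1)) := by
    intro c
    have h2 : ContDiff ℝ 1 (fun ε : ℝ => c * ε / r - 1) :=
      ((contDiff_const.mul contDiff_id).div_const r).sub contDiff_const
    have h3 : ContDiff ℝ 1 Real.smoothTransition := by
      exact_mod_cast Real.smoothTransition.contDiff (n := 1)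
    exact h3.comp h2
  exact (h _).sub (h _)

lemma chi_eq_zero_lo (hr : 0 < r) {k : ℕ} {ε : ℝ} (hε : 0 ≤ ε) (h : 2 ^ (k+1) * ε ≤ r) :
    chi r k ε = 0 := by
  have h1 : (2:ℝ) ^ k * ε ≤ 2 ^ (k+1) * ε :=
    mul_le_mul_of_nonneg_right (pow_le_pow_right₀ (by norm_num) (Nat.le_succ k)) hε
  have e1 : Real.smoothTransition (2 ^ (k+1) * ε / r - 1) = 0 :=
    Real.smoothTransition.zero_of_nonpos (by rw [sub_nonpos, div_le_one hr]; exact h)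
  have e2 : Real.smoothTransition (2 ^ k * ε / r - 1) = 0 :=
    Real.smoothTransition.zero_of_nonpos (by rw [sub_nonpos, div_le_one hr]; linarith)
  rw [chi, e1, e2, sub_zero]

lemma chi_eq_zero_hi (hr : 0 < r) {k : ℕ} {ε : ℝ} (hε : 0 ≤ ε) (h : 2 * r ≤ 2 ^ k * ε) :
    chi r k ε = 0 := by
  have h1 : (2:ℝ) ^ k * ε ≤ 2 ^ (k+1) * ε :=
    mul_le_mul_of_nonneg_right (pow_le_pow_right₀ (by norm_num) (Nat.le_succ k)) hε
  have e1 : Real.smoothTransition (2 ^ (k+1) * ε / r - 1) = 1 :=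
    Real.smoothTransition.one_of_one_le (by rw [le_sub_iff_add_le, le_div_iff₀ hr]; linarith)
  have e2 : Real.smoothTransition (2 ^ k * ε / r - 1) = 1 :=
    Real.smoothTransition.one_of_one_le (by rw [le_sub_iff_add_le, le_div_iff₀ hr]; linarith)
  rw [chi, e1, e2, sub_self]

lemma chi_ne_zero_imp (hr : 0 < r) {k : ℕ} {ε : ℝ} (hε : 0 ≤ ε) (h : chi r k ε ≠ 0) :
    r < 2 ^ (k+1) * ε := by
  by_contra hc
  push_neg at hc
  exact h (chi_eq_zero_lo hr hε hc)

lemma sum_chi (r ε : ℝ) (K : ℕ) : ∑ k ∈ Finset.range K, chi r k ε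
    = Real.smoothTransition (2 ^ K * ε / r - 1)
      - Real.smoothTransition (2 ^ 0 * ε / r - 1) :=
  Finset.sum_range_sub (fun k => Real.smoothTransition (2 ^ k * ε / r - 1)) K

lemma sum_chi_eq_one (hr : 0 < r) {K : ℕ} {ε : ℝ} (hε : 0 < ε) (hεr : ε ≤ r)
    (hK : 2 * r ≤ 2 ^ K * ε) : ∑ k ∈ Finset.range K, chi r k ε = 1 := by
  rw [sum_chi]
  have e1 : Real.smoothTransition (2 ^ K * ε / r - 1) = 1 :=
    Real.smoothTransition.one_of_one_le (by rw [le_sub_iff_add_le, le_div_iff₀ hr]; linarith)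
  have e2 : Real.smoothTransition (2 ^ 0 * ε / r - 1) = 0 :=
    Real.smoothTransition.zero_of_nonpos
      (by rw [sub_nonpos, div_le_one hr]; simpa using hεr)
  rw [e1, e2, sub_zero]

/-- truncated sums -/
def Yk (r : ℝ) (Z : ℕ → C1 r ℝ) (K : ℕ) (ε : ℝ) : C1 r ℝ :=
  ∑ k ∈ Finset.range K, chi r k ε • Z (k+1)

/-- the scale index -/
def Kof (r ε : ℝ) : ℕ := ⌈2 * r / ε⌉₊

/-- the glued function -/
def Yfun (r : ℝ) (Z : ℕ → C1 r ℝ) (ε : ℝ) : C1 r ℝ := Yk r Z (Kof r ε) ε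

lemma nat_le_two_pow (k : ℕ) : (k : ℝ) ≤ 2 ^ k := by
  have := (Nat.lt_two_pow_self (n := k)).le
  exact_mod_cast this

lemma kof_spec (hr : 0 < r) {ε : ℝ} (hε : 0 < ε) {k : ℕ} (hk : Kof r ε ≤ k) :
    2 * r ≤ 2 ^ k * ε := by
  have h1 : 2 * r / ε ≤ (Kof r ε : ℝ) := Nat.le_ceil _
  have h2 : (Kof r ε : ℝ) ≤ (k : ℝ) := by exact_mod_cast hk
  have h3 : (k : ℝ) ≤ 2 ^ k := nat_le_two_pow k
  rw [div_le_iff₀ hε] at h1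
  nlinarith

end Stmt9

namespace Stmt9
open Filter Topology

variable {r : ℝ} {q : ℕ}

lemma Yk_stable (hr : 0 < r) {ε : ℝ} (hε : 0 < ε) (Z : ℕ → C1 r ℝ) {K : ℕ}
    (hK : Kof r ε ≤ K) : Yk r Z K ε = Yk r Z (Kof r ε) ε := by
  refine (Finset.sum_subset (Finset.range_subset_range.2 hK) ?_).symm
  intro k hkK hk
  rw [Finset.mem_range, not_lt] at hk
  rw [chi_eq_zero_hi hr hε.le (kof_spec hr hε hk), zero_smul]

lemma contDiffOn_Yfun (hr : 0 < r) (Z : ℕ → C1 r ℝ) :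
    ContDiffOn ℝ 1 (Yfun r Z) (Set.Ioi 0) := by
  intro ε₀ hε₀
  have hε₀' : (0:ℝ) < ε₀ := hε₀
  set N := Kof r (ε₀ / 2) with hN
  have hsmooth : ContDiff ℝ 1 (fun ε => Yk r Z N ε) := by
    apply ContDiff.sum
    intro k _
    have : IsBoundedSMul ℝ (C1 r ℝ) := by exact @NormedSpace.toIsBoundedSMul ℝ (C1 r ℝ) _ _ _
    exact (contDiff_chi r k).smul contDiff_const
  have heq : Set.EqOn (fun ε => Yk r Z N ε) (Yfun r Z) (Set.Ioi (ε₀ / 2)) := by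
    intro ε hε
    have hε' : (0:ℝ) < ε := lt_trans (by linarith) hε
    have hmono : Kof r ε ≤ N := by
      apply Nat.ceil_le_ceil
      have hε2 : ε₀ / 2 < ε := hε
      rw [div_le_div_iff₀ hε' (by linarith)]
      nlinarith
    exact Yk_stable hr hε' Z hmono
  have hmem : Set.Ioi (ε₀ / 2) ∈ 𝓝 ε₀ := Ioi_mem_nhds (by linarith)
  have hat : ContDiffAt ℝ 1 (Yfun r Z) ε₀ :=
    hsmooth.contDiffAt.congr_of_eventuallyEq
      (Filter.eventuallyEq_of_mem hmem fun x hx => (heq hx).symm)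
  exact hat.contDiffWithinAt

variable (lam : C(Icc0 r, ℝ) →L[ℝ] (Fin q → ℝ)) (Z : ℕ → C1 r ℝ)

lemma evC_Yfun_zero (hZ0 : ∀ j, evC (Z j) 0 = 0) (ε : ℝ) : evC (Yfun r Z ε) 0 = 0 := by
  show evL r 0 (Yk r Z (Kof r ε) ε) = 0
  rw [Yk, map_sum]
  refine Finset.sum_eq_zero fun k _ => ?_
  rw [map_smul]
  show chi r k ε • evC (Z (k+1)) 0 = 0
  rw [hZ0, smul_zero]

lemma dvC_Yfun_one (hr : 0 < r) (hZ1 : ∀ j, dvC (Z j) 0 = 1) {ε : ℝ} (hε : 0 < ε)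
    (hεr : ε ≤ r) : dvC (Yfun r Z ε) 0 = 1 := by
  show dvL r 0 (Yk r Z (Kof r ε) ε) = 1
  rw [Yk, map_sum]
  have h1 : ∀ k ∈ Finset.range (Kof r ε), dvL r 0 (chi r k ε • Z (k+1)) = chi r k ε := by
    intro k _
    rw [map_smul]
    show chi r k ε • dvC (Z (k+1)) 0 = chi r k ε
    rw [hZ1, smul_eq_mul, mul_one]
  rw [Finset.sum_congr rfl h1]
  exact sum_chi_eq_one hr hε hεr (kof_spec hr hε le_rfl)

lemma lam_Yfun_zero (hZlam : ∀ j, lam (Z j).1.1 = 0) (ε : ℝ) :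
    lam (Yfun r Z ε).1.1 = 0 := by
  show lamL r q lam (Yk r Z (Kof r ε) ε) = 0
  rw [Yk, map_sum]
  refine Finset.sum_eq_zero fun k _ => ?_
  rw [map_smul]
  show chi r k ε • lam (Z (k+1)).1.1 = 0
  rw [hZlam, smul_zero]

lemma evC_Yfun_vanish (hr : 0 < r)
    (hZvan : ∀ j, ∀ t ∈ Set.Icc (-r) (-(r / 2^j)), evC (Z j) t = 0)
    {ε : ℝ} (hε : 0 < ε) {t : ℝ} (ht : t ∈ Set.Icc (-r) (-ε)) :
    evC (Yfun r Z ε) t = 0 := by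
  show evL r t (Yk r Z (Kof r ε) ε) = 0
  rw [Yk, map_sum]
  refine Finset.sum_eq_zero fun k _ => ?_
  rw [map_smul]
  show chi r k ε • evC (Z (k+1)) t = 0
  by_cases hc : chi r k ε = 0
  · rw [hc, zero_smul]
  · have h1 : r < 2 ^ (k+1) * ε := chi_ne_zero_imp hr hε.le hc
    have h2 : r / 2 ^ (k+1) < ε := by
      rw [div_lt_iff₀ (by positivity)]; linarith
    have h3 : t ∈ Set.Icc (-r) (-(r / 2 ^ (k+1))) := ⟨ht.1, by linarith [ht.2]⟩
    rw [hZvan (k+1) t h3, smul_zero]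

end Stmt9

namespace Stmt9
open TopologicalSpace
open scoped Manifold
lemma smooth_sel {FF : Type*} [NormedAddCommGroup FF] [NormedSpace ℝ FF] [FiniteDimensional ℝ FF]
    (WW : Set FF) (hW : IsOpen WW)
    (d : FF → ℝ) (hd : ContinuousOn d WW) (hdpos : ∀ w ∈ WW, 0 < d w) :
    ∃ e : FF → ℝ, ContDiffOn ℝ 1 e WW ∧ ∀ w ∈ WW, e w ∈ Set.Ioo 0 (d w) := by
  classical
  haveI : LocallyCompactSpace WW := hW.locallyCompactSpace
  haveI : SigmaCompactSpace WW := inferInstance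
  set U : Opens FF := ⟨WW, hW⟩
  have Hloc : ∀ x : U, ∃ c : ℝ, ∀ᶠ y : U in nhds x, c ∈ Set.Ioo (0:ℝ) (d y.1) := by
    intro x
    refine ⟨d x.1 / 2, ?_⟩
    have hc : ContinuousAt (fun y : U => d y.1) x := by
      have : ContinuousAt d x.1 := hd.continuousAt (hW.mem_nhds x.2)
      exact this.comp continuous_subtype_val.continuousAt
    have h1 : ∀ᶠ y : U in nhds x, d y.1 > d x.1 / 2 :=
      hc.eventually (eventually_gt_nhds (by linarith [hdpos x.1 x.2]))
    filter_upwards [h1] with y hy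
    exact ⟨by linarith [hdpos x.1 x.2], hy⟩
  obtain ⟨g, hg⟩ := exists_contMDiffMap_forall_mem_convex_of_local_const (𝓘(ℝ, FF)) (M := U) (n := ⊤)
    (t := fun x : U => Set.Ioo (0:ℝ) (d x.1)) (fun x => convex_Ioo _ _) Hloc
  refine ⟨fun x => if h : x ∈ WW then g ⟨x, h⟩ else 0, ?_, ?_⟩
  · intro x hx
    have hat : ContMDiffAt 𝓘(ℝ, FF) 𝓘(ℝ, ℝ) (⊤ : ℕ∞) (fun y => if h : y ∈ WW then g ⟨y,h⟩ else 0) x := by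
      rw [← contMDiffAt_subtype_iff (U := U) (x := ⟨x, hx⟩)]
      have he : (fun u : U => if h : (u:FF) ∈ WW then g ⟨u,h⟩ else 0) = fun u => g u := by
        funext u; simp [u.2]
      rw [he]
      exact g.contMDiff ⟨x, hx⟩
    exact (hat.contDiffAt.of_le (by exact_mod_cast le_top)).contDiffWithinAt
  · intro w hw; simpa [hw] using hg ⟨w, hw⟩

end Stmt9


/-- Proposition 4.1. -/
theorem statement9 {r : ℝ} (hr : 0 < r) {q : ℕ} {FF : Type*} [NormedAddCommGroup FF]
    [NormedSpace ℝ FF] [FiniteDimensional ℝ FF]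
    (lam : C(Icc0 r, ℝ) →L[ℝ] (Fin q → ℝ))
    (WW : Set FF) (hW : IsOpen WW) (hne : WW.Nonempty)
    (d : FF → ℝ) (hd : ContinuousOn d WW) (hdr : ∀ w ∈ WW, d w ∈ Set.Ioc (0:ℝ) r) :
    ∃ y : FF → C1 r ℝ, ContDiffOn ℝ 1 y WW ∧ ∀ w ∈ WW,
      evC (y w) 0 = 0 ∧ dvC (y w) 0 = 1 ∧ lam (y w).1.1 = 0 ∧
      ∀ t ∈ Set.Icc (-r) (-(d w)), evC (y w) t = 0 := by
  -- choose the fixed profiles `Z j` at scales `r / 2 ^ j`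
  have hzex : ∀ j : ℕ, ∃ z : C1 r ℝ, evC z 0 = 0 ∧ dvC z 0 = 1 ∧ lam z.1.1 = 0 ∧
      ∀ t ∈ Set.Icc (-r) (-(r / 2 ^ j)), evC z t = 0 := by
    intro j
    refine Stmt9.exists_z hr lam (δ := r / 2 ^ j) (by positivity) ?_
    exact div_le_self hr.le (one_le_pow₀ (by norm_num))
  choose Z hZ0 hZ1 hZlam hZvan using hzex
  -- choose a smooth minorant `e` of `d`
  obtain ⟨e, he, hed⟩ := Stmt9.smooth_sel WW hW d hd (fun w hw => (hdr w hw).1)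
  refine ⟨fun w => Stmt9.Yfun r Z (e w), ?_, ?_⟩
  · intro w hw
    have h1 : ContDiffAt ℝ 1 e w := (he w hw).contDiffAt (hW.mem_nhds hw)
    have h2 : ContDiffAt ℝ 1 (Stmt9.Yfun r Z) (e w) :=
      (Stmt9.contDiffOn_Yfun hr Z).contDiffAt (Ioi_mem_nhds (hed w hw).1)
    exact (h2.comp w h1).contDiffWithinAt
  · intro w hw
    have hεpos : 0 < e w := (hed w hw).1
    have hεlt : e w < d w := (hed w hw).2
    have hεr : e w ≤ r := le_trans hεlt.le (hdr w hw).2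
    refine ⟨Stmt9.evC_Yfun_zero Z hZ0 (e w), Stmt9.dvC_Yfun_one Z hr hZ1 hεpos hεr,
      Stmt9.lam_Yfun_zero lam Z hZlam (e w), fun t ht => ?_⟩
    exact Stmt9.evC_Yfun_vanish Z hr hZvan hεpos ⟨ht.1, by linarith [ht.2]⟩
end
end
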